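/- arXiv:2107.11890 — 4 statements merged into one kernel-verified Lean document; each statement's English description precedes it below -/
import Mathlib

section
/- Let γ be a locally finite subset of ℝ^d, let ρ > 0, and for x ∈ γ let n_x be the number of points of γ in the closed Euclidean ball of radius ρ centred at x. Assume there is a constant 𝒩 ≥ 0 such that n_x ≤ 𝒩·log(1+|x|) for all x ∈ γ, where |·| is the Euclidean norm. Then for every 𝔞 > 0 the sequence (n_x)_{x∈γ} lies in l¹_𝔞, i.e. ∑_{x∈γ} e^{−𝔞|x|} n_x < ∞. -/
open Set Metric MeasureTheory
open scoped ENNReal NNReal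

lemma aux_t_exp {s t : ℝ} (hs : 0 < s) (ht : 0 ≤ t) : t * Real.exp (-(s*t)) ≤ 1/s := by
  have h1 : s * t ≤ Real.exp (s*t) := (Real.add_one_le_exp (s*t)).trans' (by linarith)
  have h2 : t ≤ Real.exp (s*t) / s := by
    rw [le_div_iff₀ hs]; linarith [h1]
  calc t * Real.exp (-(s*t)) ≤ (Real.exp (s*t)/s) * Real.exp (-(s*t)) := by
        apply mul_le_mul_of_nonneg_right h2 (Real.exp_nonneg _)
    _ = 1/s := by
        rw [div_mul_eq_mul_div, ← Real.exp_add]; simp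

lemma aux_summable (d : ℕ) {c : ℝ} (hc : 0 < c) :
    Summable fun k : ℕ => ((k:ℝ)+1)^d * Real.exp (-c*k) := by
  have hx : |Real.exp (-c)| < 1 := by
    rw [abs_of_pos (Real.exp_pos _)]
    exact Real.exp_lt_one_iff.2 (by linarith)
  have h := summable_pow_mul_geometric_of_norm_lt_one (R := ℝ) d (r := Real.exp (-c)) (by rwa [Real.norm_eq_abs])
  have h2 : Summable fun k : ℕ => ((k+1:ℕ):ℝ)^d * Real.exp (-c)^(k+1) := by
    exact (summable_nat_add_iff 1).2 h
  have h3 := h2.mul_left (Real.exp (-c))⁻¹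
  apply h3.congr
  intro k
  have : Real.exp (-c) ≠ 0 := (Real.exp_pos _).ne'
  have e1 : Real.exp (-c) ^ (k+1) = Real.exp (-c) * Real.exp (-c * k) := by
    rw [← Real.exp_nat_mul]; push_cast; rw [← Real.exp_add]; ring_nf
  rw [e1]
  push_cast
  field_simp

lemma aux_lintegral (d : ℕ) (c : ℝ) (hc : 0 < c) :
    ∫⁻ z : EuclideanSpace ℝ (Fin d), ENNReal.ofReal (Real.exp (-(c * ‖z‖))) < ⊤ := by
  set E := EuclideanSpace ℝ (Fin d)
  set A : ℕ → Set E := fun k => closedBall (0:E) (k+1) \ ball (0:E) k with hA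
  have hpt : ∀ z : E, ENNReal.ofReal (Real.exp (-(c * ‖z‖)))
      ≤ ∑' k : ℕ, (A k).indicator (fun _ => ENNReal.ofReal (Real.exp (-c*k))) z := by
    intro z
    set k0 := ⌊‖z‖⌋₊ with hk0
    have hz0 : (0:ℝ) ≤ ‖z‖ := norm_nonneg z
    have hmem : z ∈ A k0 := by
      constructor
      · simp only [mem_closedBall, dist_zero_right]
        exact (Nat.lt_floor_add_one ‖z‖).le
      · simp only [mem_ball, dist_zero_right, not_lt]
        exact Nat.floor_le hz0
    refine le_trans ?_ (ENNReal.le_tsum k0)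
    rw [Set.indicator_of_mem hmem]
    apply ENNReal.ofReal_le_ofReal
    apply Real.exp_le_exp.2
    have : (k0:ℝ) ≤ ‖z‖ := Nat.floor_le hz0
    nlinarith
  have hint := lintegral_mono (μ := (volume : Measure E)) hpt
  rw [lintegral_tsum (fun k => ((measurable_const).indicator
    ((measurableSet_closedBall).diff measurableSet_ball)).aemeasurable)] at hint
  have hball : ∀ k : ℕ, (∫⁻ z : E, (A k).indicator (fun _ => ENNReal.ofReal (Real.exp (-c*k))) z)
      ≤ ENNReal.ofReal (((k:ℝ)+1)^d * Real.exp (-c*k)) * volume (closedBall (0:E) 1) := by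
    intro k
    rw [lintegral_indicator ((measurableSet_closedBall).diff measurableSet_ball) _,
      setLIntegral_const]
    have h1 : volume (A k) ≤ volume (closedBall (0:E) (k+1)) :=
      measure_mono diff_subset
    have h2 : volume (closedBall (0:E) ((k:ℝ)+1)) =
        ENNReal.ofReal (((k:ℝ)+1)^d) * volume (closedBall (0:E) 1) := by
      rw [Measure.addHaar_closedBall' volume (0:E) (by positivity)]
      rw [finrank_euclideanSpace_fin]
    calc ENNReal.ofReal (Real.exp (-c*k)) * volume (A k)
        ≤ ENNReal.ofReal (Real.exp (-c*k)) * (ENNReal.ofReal (((k:ℝ)+1)^d)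
          * volume (closedBall (0:E) 1)) := by
          apply mul_le_mul_right (h1.trans_eq h2)
      _ = ENNReal.ofReal (((k:ℝ)+1)^d * Real.exp (-c*k)) * volume (closedBall (0:E) 1) := by
          rw [← mul_assoc, ← ENNReal.ofReal_mul (Real.exp_nonneg _), mul_comm (Real.exp (-c*k))]
  have hsum : ∑' k : ℕ, (∫⁻ z : E, (A k).indicator
      (fun _ => ENNReal.ofReal (Real.exp (-c*k))) z) < ⊤ := by
    calc ∑' k : ℕ, (∫⁻ z : E, (A k).indicator (fun _ => ENNReal.ofReal (Real.exp (-c*k))) z)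
        ≤ ∑' k : ℕ, ENNReal.ofReal (((k:ℝ)+1)^d * Real.exp (-c*k)) * volume (closedBall (0:E) 1) :=
          ENNReal.tsum_le_tsum hball
      _ = (∑' k : ℕ, ENNReal.ofReal (((k:ℝ)+1)^d * Real.exp (-c*k))) * volume (closedBall (0:E) 1) := by
          rw [ENNReal.tsum_mul_right]
      _ < ⊤ := by
          apply ENNReal.mul_lt_top _ measure_closedBall_lt_top
          rw [← ENNReal.ofReal_tsum_of_nonneg (fun k => by positivity) (aux_summable d hc)]
          exact ENNReal.ofReal_lt_top
  exact lt_of_le_of_lt hint hsum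

theorem statement0 (d : ℕ) (γ : Set (EuclideanSpace ℝ (Fin d)))
    (hloc : ∀ K : Set (EuclideanSpace ℝ (Fin d)), IsCompact K → (γ ∩ K).Finite)
    (ρ : ℝ) (hρ : 0 < ρ) (𝒩 : ℝ) (h𝒩 : 0 ≤ 𝒩)
    (hn : ∀ x ∈ γ, ((γ ∩ closedBall x ρ).ncard : ℝ) ≤ 𝒩 * Real.log (1 + ‖x‖))
    (𝔞 : ℝ) (h𝔞 : 0 < 𝔞) :
    Summable (fun x : γ => Real.exp (-𝔞 * ‖(x : EuclideanSpace ℝ (Fin d))‖) *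
      ((γ ∩ closedBall (x : EuclideanSpace ℝ (Fin d)) ρ).ncard : ℝ)) := by
  classical
  -- γ is countable
  have hcount : γ.Countable := by
    have hsub : γ ⊆ ⋃ n : ℕ, γ ∩ closedBall (0:EuclideanSpace ℝ (Fin d)) n := by
      intro x hx
      refine mem_iUnion.2 ⟨⌈‖x‖⌉₊, hx, ?_⟩
      simp only [mem_closedBall, dist_zero_right]
      exact Nat.le_ceil _
    exact (Set.countable_iUnion
      (fun n => (hloc _ (isCompact_closedBall _ _)).countable)).mono hsub
  haveI : Countable γ := hcount.to_subtype
  -- key finiteness claim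
  have key : ∀ b : ℝ, 0 < b →
      ∑' x : γ, ENNReal.ofReal (Real.exp (-(b * ‖(x:EuclideanSpace ℝ (Fin d))‖))) ≠ ⊤ := by
    intro b hb
    set r : ℝ := ρ/2 with hrdef
    have hr : 0 < r := by positivity
    set V : ℝ≥0∞ := volume (closedBall (0:EuclideanSpace ℝ (Fin d)) r) with hVdef
    have hV0 : V ≠ 0 := (measure_closedBall_pos volume _ hr).ne'
    have hVtop : V ≠ ⊤ := measure_closedBall_lt_top.ne
    set g : EuclideanSpace ℝ (Fin d) → ℝ≥0∞ :=
      fun z => ENNReal.ofReal (Real.exp (b*r) * Real.exp (-(b*‖z‖))) with hgdef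
    have hgmeas : Measurable g := by
      apply Measurable.ennreal_ofReal
      exact (continuous_const.mul ((Real.continuous_exp.comp
        ((continuous_const.mul continuous_norm).neg)))).measurable
    -- step: single-ball bound
    have step : ∀ x : γ, ENNReal.ofReal (Real.exp (-(b * ‖(x:EuclideanSpace ℝ (Fin d))‖))) * V
        ≤ ∫⁻ z, (closedBall (x:EuclideanSpace ℝ (Fin d)) r).indicator g z := by
      intro x
      rw [lintegral_indicator measurableSet_closedBall]
      have hvol : volume (closedBall (x:EuclideanSpace ℝ (Fin d)) r) = V := by
        rw [hVdef, Measure.addHaar_closedBall' volume _ hr.le,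
          Measure.addHaar_closedBall' volume _ hr.le]
      rw [← hvol, ← setLIntegral_const]
      refine setLIntegral_mono hgmeas (fun z hz => ?_)
      rw [hgdef]
      apply ENNReal.ofReal_le_ofReal
      rw [← Real.exp_add]
      apply Real.exp_le_exp.2
      have hzx : dist z (x:EuclideanSpace ℝ (Fin d)) ≤ r := mem_closedBall.1 hz
      have h1 : ‖z‖ ≤ dist z (x:EuclideanSpace ℝ (Fin d)) + ‖(x:EuclideanSpace ℝ (Fin d))‖ := by
        have := dist_triangle z (x:EuclideanSpace ℝ (Fin d)) 0
        simpa [dist_zero_right] using this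
      nlinarith
    -- multiplicity bound
    have mult : ∀ z : EuclideanSpace ℝ (Fin d), (∑' x : γ, (closedBall (x:EuclideanSpace ℝ (Fin d)) r).indicator g z)
        ≤ ENNReal.ofReal (𝒩 * (‖z‖ + r)) * g z := by
      intro z
      set S : Set γ := {x : γ | z ∈ closedBall (x:EuclideanSpace ℝ (Fin d)) r} with hSdef
      have hrewrite : (fun x : γ => (closedBall (x:EuclideanSpace ℝ (Fin d)) r).indicator g z)
          = S.indicator (fun _ => g z) := by
        funext x
        by_cases hx : z ∈ closedBall (x:EuclideanSpace ℝ (Fin d)) r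
        · rw [Set.indicator_of_mem hx, Set.indicator_of_mem (by exact hx)]
        · rw [Set.indicator_of_notMem hx, Set.indicator_of_notMem (by exact hx)]
      rw [hrewrite]
      rcases eq_empty_or_nonempty S with hS | ⟨x0, hx0⟩
      · simp [hS]
      -- S is finite
      have hSfin : S.Finite := by
        have h1 : S ⊆ (fun x : γ => (x:EuclideanSpace ℝ (Fin d))) ⁻¹' (γ ∩ closedBall z r) := by
          intro x hx
          exact ⟨x.2, by simpa [hSdef, mem_closedBall, dist_comm] using hx⟩
        exact (Set.Finite.preimage (Subtype.val_injective.injOn)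
          (hloc _ (isCompact_closedBall _ _))).subset h1
      have hBfin : (γ ∩ closedBall (x0:EuclideanSpace ℝ (Fin d)) ρ).Finite := hloc _ (isCompact_closedBall _ _)
      have htsum : ∑' x : γ, S.indicator (fun _ => g z) x
          = (hSfin.toFinset.card : ℝ≥0∞) * g z := by
        rw [tsum_eq_sum (s := hSfin.toFinset)
          (fun x hx => Set.indicator_of_notMem (by simpa using hx) _)]
        rw [Finset.sum_congr rfl (fun x hx => Set.indicator_of_mem (by simpa using hx) _)]
        simp [Finset.sum_const, nsmul_eq_mul]
      rw [htsum]
      apply mul_le_mul_left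
      have hcard : hSfin.toFinset.card ≤ (γ ∩ closedBall (x0:EuclideanSpace ℝ (Fin d)) ρ).ncard := by
        rw [Set.ncard_eq_toFinset_card _ hBfin]
        refine Finset.card_le_card_of_injOn (f := fun x : γ => (x:EuclideanSpace ℝ (Fin d))) ?_ ?_
        · intro x hx
          simp only [Finset.mem_coe, Set.Finite.mem_toFinset] at *
          refine ⟨x.2, ?_⟩
          have h1 : dist z (x:EuclideanSpace ℝ (Fin d)) ≤ r := mem_closedBall.1 hx
          have h2 : dist z (x0:EuclideanSpace ℝ (Fin d)) ≤ r := mem_closedBall.1 hx0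
          rw [mem_closedBall]
          calc dist (x:EuclideanSpace ℝ (Fin d)) (x0:EuclideanSpace ℝ (Fin d)) ≤ dist (x:EuclideanSpace ℝ (Fin d)) z + dist z (x0:EuclideanSpace ℝ (Fin d)) := dist_triangle _ _ _
            _ ≤ r + r := by rw [dist_comm]; exact add_le_add h1 h2
            _ = ρ := by rw [hrdef]; ring
        · exact Subtype.val_injective.injOn.mono (fun x _ => trivial)
      have hlog := hn (x0:EuclideanSpace ℝ (Fin d)) x0.2
      have hnorm : ‖(x0:EuclideanSpace ℝ (Fin d))‖ ≤ ‖z‖ + r := by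
        have h2 : dist z (x0:EuclideanSpace ℝ (Fin d)) ≤ r := mem_closedBall.1 hx0
        have := dist_triangle (x0:EuclideanSpace ℝ (Fin d)) z 0
        simp only [dist_zero_right] at this
        rw [dist_comm] at h2
        linarith
      have hlog2 : Real.log (1 + ‖(x0:EuclideanSpace ℝ (Fin d))‖) ≤ ‖(x0:EuclideanSpace ℝ (Fin d))‖ := by
        have := Real.log_le_sub_one_of_pos (x := 1 + ‖(x0:EuclideanSpace ℝ (Fin d))‖) (by positivity)
        linarith
      calc (hSfin.toFinset.card : ℝ≥0∞) ≤ ((γ ∩ closedBall (x0:EuclideanSpace ℝ (Fin d)) ρ).ncard : ℝ≥0∞) := by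
            exact_mod_cast hcard
        _ = ENNReal.ofReal ((γ ∩ closedBall (x0:EuclideanSpace ℝ (Fin d)) ρ).ncard : ℝ) := by
            rw [ENNReal.ofReal_natCast]
        _ ≤ ENNReal.ofReal (𝒩 * (‖z‖ + r)) := by
            apply ENNReal.ofReal_le_ofReal
            calc ((γ ∩ closedBall (x0:EuclideanSpace ℝ (Fin d)) ρ).ncard : ℝ) ≤ 𝒩 * Real.log (1 + ‖(x0:EuclideanSpace ℝ (Fin d))‖) := hlog
              _ ≤ 𝒩 * (‖z‖ + r) := by
                  apply mul_le_mul_of_nonneg_left _ h𝒩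
                  exact hlog2.trans hnorm
    -- pointwise integrand bound
    have intbd : ∀ z : EuclideanSpace ℝ (Fin d), ENNReal.ofReal (𝒩 * (‖z‖ + r)) * g z
        ≤ ENNReal.ofReal (𝒩 * Real.exp (b*r) * (2/b + r)) *
          ENNReal.ofReal (Real.exp (-(b/2 * ‖z‖))) := by
      intro z
      rw [hgdef, ← ENNReal.ofReal_mul (by positivity), ← ENNReal.ofReal_mul (by positivity)]
      apply ENNReal.ofReal_le_ofReal
      have ht : (0:ℝ) ≤ ‖z‖ := norm_nonneg z
      have hb2 : 0 < b/2 := by positivity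
      have h1 : ‖z‖ * Real.exp (-(b/2 * ‖z‖)) ≤ 2/b := by
        have := aux_t_exp hb2 ht
        rw [show (1:ℝ)/(b/2) = 2/b by field_simp] at this
        exact this
      have h2 : Real.exp (-(b/2 * ‖z‖)) ≤ 1 := Real.exp_le_one_iff.2 (by nlinarith)
      have hE1 : Real.exp (-(b*‖z‖))
          = Real.exp (-(b/2 * ‖z‖)) * Real.exp (-(b/2 * ‖z‖)) := by
        rw [← Real.exp_add]; ring_nf
      rw [hE1]
      have hA : (0:ℝ) ≤ 𝒩 * Real.exp (b*r) * Real.exp (-(b/2 * ‖z‖)) := by positivity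
      have hB : (0:ℝ) ≤ 𝒩 * Real.exp (b*r) * r * Real.exp (-(b/2 * ‖z‖)) := by positivity
      nlinarith [mul_le_mul_of_nonneg_right h1 hA, mul_le_mul_of_nonneg_right h2 hB]
    -- chain everything
    have hmeas2 : Measurable fun z : EuclideanSpace ℝ (Fin d) => ENNReal.ofReal (Real.exp (-(b/2 * ‖z‖))) := by
      apply Measurable.ennreal_ofReal
      exact (Real.continuous_exp.comp ((continuous_const.mul continuous_norm).neg)).measurable
    have chain : (∑' x : γ, ENNReal.ofReal (Real.exp (-(b * ‖(x:EuclideanSpace ℝ (Fin d))‖)))) * V < ⊤ := by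
      calc (∑' x : γ, ENNReal.ofReal (Real.exp (-(b * ‖(x:EuclideanSpace ℝ (Fin d))‖)))) * V
          = ∑' x : γ, ENNReal.ofReal (Real.exp (-(b * ‖(x:EuclideanSpace ℝ (Fin d))‖))) * V :=
            ENNReal.tsum_mul_right.symm
        _ ≤ ∑' x : γ, ∫⁻ z, (closedBall (x:EuclideanSpace ℝ (Fin d)) r).indicator g z := ENNReal.tsum_le_tsum step
        _ = ∫⁻ z, ∑' x : γ, (closedBall (x:EuclideanSpace ℝ (Fin d)) r).indicator g z := by
            rw [lintegral_tsum (fun x =>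
              (hgmeas.indicator measurableSet_closedBall).aemeasurable)]
        _ ≤ ∫⁻ z, ENNReal.ofReal (𝒩 * (‖z‖ + r)) * g z := lintegral_mono mult
        _ ≤ ∫⁻ z, ENNReal.ofReal (𝒩 * Real.exp (b*r) * (2/b + r)) *
              ENNReal.ofReal (Real.exp (-(b/2 * ‖z‖))) := lintegral_mono intbd
        _ = ENNReal.ofReal (𝒩 * Real.exp (b*r) * (2/b + r)) *
              ∫⁻ z, ENNReal.ofReal (Real.exp (-(b/2 * ‖z‖))) :=
            lintegral_const_mul _ hmeas2
        _ < ⊤ := ENNReal.mul_lt_top ENNReal.ofReal_lt_top (aux_lintegral d (b/2) (by positivity))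
    intro htop
    rw [htop, ENNReal.top_mul hV0] at chain
    exact (lt_irrefl _ chain)
  -- conclude summability
  have hsummb : Summable fun x : γ => Real.exp (-(𝔞/2 * ‖(x:EuclideanSpace ℝ (Fin d))‖)) := by
    have h := ENNReal.summable_toReal (key (𝔞/2) (by positivity))
    refine h.congr fun x => ?_
    rw [ENNReal.toReal_ofReal (Real.exp_nonneg _)]
  refine Summable.of_nonneg_of_le (fun x => by positivity) ?_
    (hsummb.mul_left (𝒩 * (2/𝔞)))
  intro x
  set t : ℝ := ‖(x:EuclideanSpace ℝ (Fin d))‖ with htdef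
  have ht : 0 ≤ t := norm_nonneg _
  have hlog2 : Real.log (1 + t) ≤ t := by
    have := Real.log_le_sub_one_of_pos (x := 1 + t) (by positivity)
    linarith
  have hexp : t ≤ (2/𝔞) * Real.exp (𝔞/2 * t) := by
    have h1 : 𝔞/2 * t ≤ Real.exp (𝔞/2 * t) :=
      (Real.add_one_le_exp _).trans' (by nlinarith)
    have h2 := mul_le_mul_of_nonneg_left h1 (le_of_lt (by positivity : (0:ℝ) < 2/𝔞))
    calc t = 2/𝔞 * (𝔞/2*t) := by field_simp
      _ ≤ 2/𝔞 * Real.exp (𝔞/2*t) := h2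
  have hbound : ((γ ∩ closedBall (x:EuclideanSpace ℝ (Fin d)) ρ).ncard : ℝ)
      ≤ 𝒩 * ((2/𝔞) * Real.exp (𝔞/2 * t)) := by
    calc ((γ ∩ closedBall (x:EuclideanSpace ℝ (Fin d)) ρ).ncard : ℝ) ≤ 𝒩 * Real.log (1 + t) := hn _ x.2
      _ ≤ 𝒩 * ((2/𝔞) * Real.exp (𝔞/2 * t)) :=
          mul_le_mul_of_nonneg_left (hlog2.trans hexp) h𝒩
  have hprod : Real.exp (-𝔞 * t) * Real.exp (𝔞/2 * t) = Real.exp (-(𝔞/2 * t)) := by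
    rw [← Real.exp_add]; ring_nf
  calc Real.exp (-𝔞 * t) * ((γ ∩ closedBall (x:EuclideanSpace ℝ (Fin d)) ρ).ncard : ℝ)
      ≤ Real.exp (-𝔞 * t) * (𝒩 * ((2/𝔞) * Real.exp (𝔞/2 * t))) :=
        mul_le_mul_of_nonneg_left hbound (Real.exp_nonneg _)
    _ = 𝒩 * (2/𝔞) * (Real.exp (-𝔞 * t) * Real.exp (𝔞/2 * t)) := by ring
    _ = 𝒩 * (2/𝔞) * Real.exp (-(𝔞/2 * t)) := by rw [hprod]
end

section
/- Let γ ⊂ ℝ^d be locally finite, ρ > 0, B_x = γ ∩ {y : |x−y| ≤ ρ}, n_x = #B_x, and assume n_x ≤ 𝒩·log(1+|x|) for all x ∈ γ and a constant 𝒩 ≥ 0. Let Q = (Q_{x,y})_{x,y∈γ} be a real matrix with Q_{x,y} = 0 whenever y ∉ B_x, and suppose there are C > 0 and q ≥ 1 with |Q_{x,y}| ≤ C·n_x^q for all x, y ∈ γ. Then there exists a constant L > 0, depending only on C, q, 𝒩, ρ and the interval [𝔞₋, 𝔞₊] ⊂ (0,∞), such that for all 𝔞₋ ≤ α < β ≤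 𝔞₊ and every z ∈ l¹_α, the sequence Qz defined by (Qz)_x = ∑_{y∈γ} Q_{x,y} z_y lies in l¹_β and ‖Qz‖_{l¹_β} ≤ L (β−α)^{−1/2} ‖z‖_{l¹_α}; that is, Q is an Ovsjannikov map of order 1/2 on the scale {l¹_𝔞}_{𝔞∈[𝔞₋,𝔞₊]}. -/
open Set Metric

lemma auxSqrtLeExp (u : ℝ) (hu : 0 ≤ u) : Real.sqrt u ≤ Real.exp u := by
  have h1 : Real.sqrt u ≤ 1 + u := by
    nlinarith [Real.sq_sqrt hu, Real.sqrt_nonneg u]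
  linarith [Real.add_one_le_exp u]

lemma auxDecay {δ t : ℝ} (hδ : 0 < δ) (ht : 0 ≤ t) :
    Real.sqrt (1 + t) * Real.exp (-(δ * (1 + t))) ≤ 1 / Real.sqrt δ := by
  have h1t : (0:ℝ) ≤ 1 + t := by linarith
  have hu : (0:ℝ) ≤ δ * (1 + t) := by positivity
  have hsδ : 0 < Real.sqrt δ := Real.sqrt_pos.2 hδ
  have hst : Real.sqrt (1 + t) = Real.sqrt (δ * (1 + t)) / Real.sqrt δ := by
    rw [← Real.sqrt_div hu]
    congr 1
    field_simp
  have key : Real.sqrt (δ * (1 + t)) * Real.exp (-(δ * (1 + t))) ≤ 1 := by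
    calc Real.sqrt (δ * (1 + t)) * Real.exp (-(δ * (1 + t)))
        ≤ Real.exp (δ * (1 + t)) * Real.exp (-(δ * (1 + t))) :=
          mul_le_mul_of_nonneg_right (auxSqrtLeExp _ hu) (Real.exp_pos _).le
      _ = 1 := by rw [← Real.exp_add]; simp
  rw [hst, div_mul_eq_mul_div, div_le_div_iff₀ hsδ hsδ, one_mul]
  calc Real.sqrt (δ * (1 + t)) * Real.exp (-(δ * (1 + t))) * Real.sqrt δ
      ≤ 1 * Real.sqrt δ := mul_le_mul_of_nonneg_right key hsδ.le
    _ = Real.sqrt δ := one_mul _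

lemma auxLogLe {s : ℝ} (hs : 0 < s) {u : ℝ} (hu : 1 ≤ u) : Real.log u ≤ u ^ s / s := by
  have hu0 : (0:ℝ) < u := by linarith
  have h := Real.log_le_sub_one_of_pos (Real.rpow_pos_of_pos hu0 s)
  rw [Real.log_rpow hu0] at h
  rw [le_div_iff₀ hs]
  linarith

lemma auxKey (C q 𝒩 ρ amax α β s t : ℝ) (hC : 0 < C) (hq : 1 ≤ q) (h𝒩 : 0 ≤ 𝒩) (hρ : 0 < ρ)
    (hs : s = 1 / (2 * (q + 1))) (hα : 0 < α) (hαβ : α < β) (hβ : β ≤ amax) (ht : 0 ≤ t) :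
    (𝒩 * Real.log (1 + t)) * (Real.exp (ρ * β - β * t) * (C * (𝒩 * Real.log (1 + t + ρ)) ^ q)) ≤
    C * Real.exp (ρ * amax) * Real.exp amax * ((𝒩 / s + 1) ^ (q + 1) * (1 + ρ) ^ (s * q)) /
      Real.sqrt (β - α) * Real.exp (-α * t) := by
  have hq1 : (0:ℝ) < q + 1 := by linarith
  have hspos : 0 < s := by rw [hs]; positivity
  have hδ : 0 < β - α := by linarith
  have hβpos : 0 < β := by linarith
  have h1t : (1:ℝ) ≤ 1 + t := by linarith
  have h1tρ : (1:ℝ) ≤ 1 + t + ρ := by linarith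
  have hP : (0:ℝ) < 1 + t := by linarith
  have hPρ : (0:ℝ) < 1 + ρ := by linarith
  have hD : 0 < 𝒩 / s + 1 := by positivity
  have h1 : 𝒩 * Real.log (1 + t) ≤ (𝒩 / s + 1) * (1 + t) ^ s := by
    have hl := auxLogLe hspos h1t
    have hr : (0:ℝ) < (1 + t) ^ s := Real.rpow_pos_of_pos hP s
    calc 𝒩 * Real.log (1 + t) ≤ 𝒩 * ((1 + t) ^ s / s) := mul_le_mul_of_nonneg_left hl h𝒩
      _ = (𝒩 / s) * (1 + t) ^ s := by ring
      _ ≤ (𝒩 / s + 1) * (1 + t) ^ s := by nlinarith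
  have h2 : 𝒩 * Real.log (1 + t + ρ) ≤ (𝒩 / s + 1) * ((1 + ρ) ^ s * (1 + t) ^ s) := by
    have hX : (0:ℝ) < (1 + ρ) ^ s * (1 + t) ^ s :=
      mul_pos (Real.rpow_pos_of_pos hPρ s) (Real.rpow_pos_of_pos hP s)
    have hl : Real.log (1 + t + ρ) ≤ ((1 + ρ) ^ s * (1 + t) ^ s) / s := by
      have h2' : (1 + t + ρ : ℝ) ^ s ≤ ((1 + ρ) * (1 + t)) ^ s :=
        Real.rpow_le_rpow (by linarith) (by nlinarith) hspos.le
      have h3' : ((1 + ρ) * (1 + t) : ℝ) ^ s = (1 + ρ) ^ s * (1 + t) ^ s :=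
        Real.mul_rpow hPρ.le hP.le
      calc Real.log (1 + t + ρ) ≤ (1 + t + ρ) ^ s / s := auxLogLe hspos h1tρ
        _ ≤ ((1 + ρ) ^ s * (1 + t) ^ s) / s := by rw [← h3']; gcongr
    calc 𝒩 * Real.log (1 + t + ρ) ≤ 𝒩 * (((1 + ρ) ^ s * (1 + t) ^ s) / s) :=
          mul_le_mul_of_nonneg_left hl h𝒩
      _ = (𝒩 / s) * ((1 + ρ) ^ s * (1 + t) ^ s) := by ring
      _ ≤ (𝒩 / s + 1) * ((1 + ρ) ^ s * (1 + t) ^ s) := by nlinarith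
  have hbase2 : 0 ≤ 𝒩 * Real.log (1 + t + ρ) := mul_nonneg h𝒩 (Real.log_nonneg h1tρ)
  have h2q : (𝒩 * Real.log (1 + t + ρ)) ^ q ≤
      (𝒩 / s + 1) ^ q * ((1 + ρ) ^ (s * q) * (1 + t) ^ (s * q)) := by
    have hthis := Real.rpow_le_rpow hbase2 h2 (by linarith : (0:ℝ) ≤ q)
    calc (𝒩 * Real.log (1 + t + ρ)) ^ q
        ≤ ((𝒩 / s + 1) * ((1 + ρ) ^ s * (1 + t) ^ s)) ^ q := hthis
      _ = (𝒩 / s + 1) ^ q * ((1 + ρ) ^ (s * q) * (1 + t) ^ (s * q)) := by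
          rw [Real.mul_rpow hD.le (by positivity), Real.mul_rpow (by positivity) (by positivity),
            ← Real.rpow_mul hPρ.le, ← Real.rpow_mul hP.le]
  have hnl1 : 0 ≤ 𝒩 * Real.log (1 + t) := mul_nonneg h𝒩 (Real.log_nonneg h1t)
  have hnl2 : 0 ≤ (𝒩 * Real.log (1 + t + ρ)) ^ q := Real.rpow_nonneg hbase2 q
  have m1 : (𝒩 * Real.log (1 + t)) * (𝒩 * Real.log (1 + t + ρ)) ^ q ≤
      ((𝒩 / s + 1) * (1 + t) ^ s) * ((𝒩 / s + 1) ^ q * ((1 + ρ) ^ (s * q) * (1 + t) ^ (s * q))) :=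
    mul_le_mul h1 h2q hnl2 (by positivity)
  have hrpow_sum1 : (𝒩 / s + 1 : ℝ) ^ (q + 1) = (𝒩 / s + 1) ^ q * (𝒩 / s + 1) := by
    rw [Real.rpow_add hD, Real.rpow_one]
  have hrpow_sum2 : Real.sqrt (1 + t) = (1 + t) ^ s * (1 + t) ^ (s * q) := by
    rw [← Real.rpow_add hP]
    have hexp : s + s * q = 1 / 2 := by rw [hs]; field_simp; ring
    rw [hexp, Real.sqrt_eq_rpow]
  have m1' : ((𝒩 / s + 1) * (1 + t) ^ s) *
      ((𝒩 / s + 1) ^ q * ((1 + ρ) ^ (s * q) * (1 + t) ^ (s * q))) =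
      (𝒩 / s + 1) ^ (q + 1) * (1 + ρ) ^ (s * q) * Real.sqrt (1 + t) := by
    rw [hrpow_sum1, hrpow_sum2]; ring
  have hExpρ : Real.exp (ρ * β) ≤ Real.exp (ρ * amax) := Real.exp_le_exp.2 (by nlinarith)
  have e1 : Real.exp (-((β - α) * t)) = Real.exp (β - α) * Real.exp (-((β - α) * (1 + t))) := by
    rw [← Real.exp_add]; congr 1; ring
  have hdecay2 : Real.sqrt (1 + t) * Real.exp (-((β - α) * t)) ≤
      Real.exp amax * (1 / Real.sqrt (β - α)) := by
    rw [e1]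
    calc Real.sqrt (1 + t) * (Real.exp (β - α) * Real.exp (-((β - α) * (1 + t))))
        = Real.exp (β - α) * (Real.sqrt (1 + t) * Real.exp (-((β - α) * (1 + t)))) := by ring
      _ ≤ Real.exp (β - α) * (1 / Real.sqrt (β - α)) :=
          mul_le_mul_of_nonneg_left (auxDecay hδ ht) (Real.exp_pos _).le
      _ ≤ Real.exp amax * (1 / Real.sqrt (β - α)) :=
          mul_le_mul_of_nonneg_right (Real.exp_le_exp.2 (by linarith)) (by positivity)
  have hExpSplit : Real.exp (ρ * β - β * t) =
      Real.exp (ρ * β) * (Real.exp (-((β - α) * t)) * Real.exp (-α * t)) := by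
    rw [← Real.exp_add, ← Real.exp_add]; congr 1; ring
  calc (𝒩 * Real.log (1 + t)) * (Real.exp (ρ * β - β * t) * (C * (𝒩 * Real.log (1 + t + ρ)) ^ q))
      = ((𝒩 * Real.log (1 + t)) * (𝒩 * Real.log (1 + t + ρ)) ^ q) * Real.exp (ρ * β) *
          Real.exp (-((β - α) * t)) * (C * Real.exp (-α * t)) := by rw [hExpSplit]; ring
    _ ≤ ((𝒩 / s + 1) ^ (q + 1) * (1 + ρ) ^ (s * q) * Real.sqrt (1 + t)) * Real.exp (ρ * amax) *
          Real.exp (-((β - α) * t)) * (C * Real.exp (-α * t)) := by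
        rw [← m1']
        refine mul_le_mul_of_nonneg_right ?_ (by positivity)
        refine mul_le_mul_of_nonneg_right ?_ (Real.exp_pos _).le
        exact mul_le_mul m1 hExpρ (Real.exp_pos _).le (by positivity)
    _ = ((𝒩 / s + 1) ^ (q + 1) * (1 + ρ) ^ (s * q) * Real.exp (ρ * amax) * C) *
          (Real.sqrt (1 + t) * Real.exp (-((β - α) * t))) * Real.exp (-α * t) := by ring
    _ ≤ ((𝒩 / s + 1) ^ (q + 1) * (1 + ρ) ^ (s * q) * Real.exp (ρ * amax) * C) *
          (Real.exp amax * (1 / Real.sqrt (β - α))) * Real.exp (-α * t) := by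
        refine mul_le_mul_of_nonneg_right ?_ (Real.exp_pos _).le
        exact mul_le_mul_of_nonneg_left hdecay2 (by positivity)
    _ = C * Real.exp (ρ * amax) * Real.exp amax * ((𝒩 / s + 1) ^ (q + 1) * (1 + ρ) ^ (s * q)) /
          Real.sqrt (β - α) * Real.exp (-α * t) := by ring

theorem statement8 (d : ℕ) (γ : Set (EuclideanSpace ℝ (Fin d)))
    (hloc : ∀ K : Set (EuclideanSpace ℝ (Fin d)), IsCompact K → (γ ∩ K).Finite)
    (ρ : ℝ) (hρ : 0 < ρ) (𝒩 : ℝ) (h𝒩 : 0 ≤ 𝒩)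
    (hn : ∀ x ∈ γ, ((γ ∩ closedBall x ρ).ncard : ℝ) ≤ 𝒩 * Real.log (1 + ‖x‖))
    (amin amax : ℝ) (hamin : 0 < amin) (hminmax : amin < amax)
    (Q : γ → γ → ℝ)
    (hQ0 : ∀ x y : γ, (y : EuclideanSpace ℝ (Fin d)) ∉
      closedBall (x : EuclideanSpace ℝ (Fin d)) ρ → Q x y = 0)
    (C q : ℝ) (hC : 0 < C) (hq : 1 ≤ q)
    (hQb : ∀ x y : γ, |Q x y| ≤
      C * ((γ ∩ closedBall (x : EuclideanSpace ℝ (Fin d)) ρ).ncard : ℝ) ^ q) :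
    ∃ L > (0 : ℝ), ∀ α β : ℝ, amin ≤ α → α < β → β ≤ amax → ∀ z : γ → ℝ,
      Summable (fun x : γ => Real.exp (-α * ‖(x : EuclideanSpace ℝ (Fin d))‖) * |z x|) →
      Summable (fun x : γ => Real.exp (-β * ‖(x : EuclideanSpace ℝ (Fin d))‖) *
          |∑' y : γ, Q x y * z y|) ∧
      (∑' x : γ, Real.exp (-β * ‖(x : EuclideanSpace ℝ (Fin d))‖) *
          |∑' y : γ, Q x y * z y|) ≤
        L / Real.sqrt (β - α) *
          ∑' x : γ, Real.exp (-α * ‖(x : EuclideanSpace ℝ (Fin d))‖) * |z x| := by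
  classical
  have hq1 : (0:ℝ) < q + 1 := by linarith
  set s : ℝ := 1 / (2 * (q + 1)) with hs_def
  have hspos : 0 < s := by rw [hs_def]; positivity
  have hDs : (0:ℝ) < 𝒩 / s + 1 := by
    have := div_nonneg h𝒩 hspos.le
    linarith
  set L : ℝ := C * Real.exp (ρ * amax) * Real.exp amax *
      ((𝒩 / s + 1) ^ (q + 1) * (1 + ρ) ^ (s * q)) with hL_def
  have hL : 0 < L := by
    have h1 : (0:ℝ) < (𝒩 / s + 1) ^ (q + 1) := Real.rpow_pos_of_pos hDs _
    have h2 : (0:ℝ) < (1 + ρ) ^ (s * q) := Real.rpow_pos_of_pos (by linarith) _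
    rw [hL_def]
    positivity
  refine ⟨L, hL, ?_⟩
  intro α β hαmin hαβ hβmax z hz
  have hαpos : 0 < α := lt_of_lt_of_le hamin hαmin
  have hβpos : 0 < β := by linarith
  have hδ : 0 < β - α := by linarith
  -- finiteness of balls (as subsets of γ)
  have hball : ∀ a : EuclideanSpace ℝ (Fin d),
      ({x : γ | (x : EuclideanSpace ℝ (Fin d)) ∈ closedBall a ρ}).Finite := by
    intro a
    have h1 := hloc (closedBall a ρ) (isCompact_closedBall a ρ)
    have h2 : {x : γ | (x : EuclideanSpace ℝ (Fin d)) ∈ closedBall a ρ} =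
        Subtype.val ⁻¹' (γ ∩ closedBall a ρ) := by
      ext x; simp [x.2]
    rw [h2]
    exact h1.preimage Subtype.val_injective.injOn
  have hcard : ∀ a : EuclideanSpace ℝ (Fin d),
      (((hball a).toFinset.card : ℝ)) = ((γ ∩ closedBall a ρ).ncard : ℝ) := by
    intro a
    congr 1
    have himg : γ ∩ closedBall a ρ =
        Subtype.val '' {x : γ | (x : EuclideanSpace ℝ (Fin d)) ∈ closedBall a ρ} := by
      ext b
      constructor
      · rintro ⟨hbγ, hbB⟩
        exact ⟨⟨b, hbγ⟩, hbB, rfl⟩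
      · rintro ⟨x, hx, rfl⟩
        exact ⟨x.2, hx⟩
    rw [himg, Set.ncard_image_of_injective _ Subtype.val_injective,
      Set.ncard_eq_toFinset_card _ (hball a)]
  -- the kernel
  set F : γ → γ → ℝ := fun x y =>
    Real.exp (-β * ‖(x : EuclideanSpace ℝ (Fin d))‖) * |Q x y * z y| with hF
  have hFnn : ∀ x y, 0 ≤ F x y := fun x y => by
    simp only [hF]; positivity
  have hF0 : ∀ (y x : γ), x ∉ (hball (y : EuclideanSpace ℝ (Fin d))).toFinset → F x y = 0 := by
    intro y x hx
    have hmem : (y : EuclideanSpace ℝ (Fin d)) ∉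
        closedBall (x : EuclideanSpace ℝ (Fin d)) ρ := by
      simp only [Set.Finite.mem_toFinset, Set.mem_setOf_eq, mem_closedBall] at hx
      simp only [mem_closedBall]
      rw [dist_comm]
      exact hx
    simp only [hF, hQ0 x y hmem, zero_mul, abs_zero, mul_zero]
  have hsumx : ∀ y, Summable (fun x => F x y) := fun y =>
    summable_of_ne_finset_zero (hF0 y)
  -- per-pair bound
  have hpair : ∀ (y x : γ), x ∈ (hball (y : EuclideanSpace ℝ (Fin d))).toFinset →
      F x y ≤ Real.exp (ρ * β - β * ‖(y : EuclideanSpace ℝ (Fin d))‖) *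
        (C * (𝒩 * Real.log (1 + ‖(y : EuclideanSpace ℝ (Fin d))‖ + ρ)) ^ q) * |z y| := by
    intro y x hx
    simp only [Set.Finite.mem_toFinset, Set.mem_setOf_eq, mem_closedBall] at hx
    have hd : dist (x : EuclideanSpace ℝ (Fin d)) (y : EuclideanSpace ℝ (Fin d)) =
        ‖(x : EuclideanSpace ℝ (Fin d)) - (y : EuclideanSpace ℝ (Fin d))‖ := dist_eq_norm _ _
    have habs := abs_norm_sub_norm_le (x : EuclideanSpace ℝ (Fin d))
      (y : EuclideanSpace ℝ (Fin d))
    rw [← hd] at habs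
    have h12 := abs_le.1 habs
    have hx1 : ‖(x : EuclideanSpace ℝ (Fin d))‖ ≤ ‖(y : EuclideanSpace ℝ (Fin d))‖ + ρ := by
      linarith [h12.2, hx]
    have hx2 : ‖(y : EuclideanSpace ℝ (Fin d))‖ - ρ ≤ ‖(x : EuclideanSpace ℝ (Fin d))‖ := by
      linarith [h12.1, hx]
    have hexp : Real.exp (-β * ‖(x : EuclideanSpace ℝ (Fin d))‖) ≤
        Real.exp (ρ * β - β * ‖(y : EuclideanSpace ℝ (Fin d))‖) := by
      apply Real.exp_le_exp.2
      nlinarith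
    have hQle : |Q x y| ≤ C * (𝒩 * Real.log (1 + ‖(y : EuclideanSpace ℝ (Fin d))‖ + ρ)) ^ q := by
      refine (hQb x y).trans ?_
      refine mul_le_mul_of_nonneg_left ?_ hC.le
      have hcard_le := hn _ x.2
      have hlog : 𝒩 * Real.log (1 + ‖(x : EuclideanSpace ℝ (Fin d))‖) ≤
          𝒩 * Real.log (1 + ‖(y : EuclideanSpace ℝ (Fin d))‖ + ρ) := by
        apply mul_le_mul_of_nonneg_left ?_ h𝒩
        apply Real.log_le_log (by positivity)
        linarith
      exact Real.rpow_le_rpow (Nat.cast_nonneg _) (hcard_le.trans hlog) (by linarith)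
    calc F x y = Real.exp (-β * ‖(x : EuclideanSpace ℝ (Fin d))‖) * |Q x y| * |z y| := by
          simp only [hF, abs_mul]; ring
      _ ≤ Real.exp (ρ * β - β * ‖(y : EuclideanSpace ℝ (Fin d))‖) *
            (C * (𝒩 * Real.log (1 + ‖(y : EuclideanSpace ℝ (Fin d))‖ + ρ)) ^ q) * |z y| := by
          refine mul_le_mul_of_nonneg_right ?_ (abs_nonneg _)
          exact mul_le_mul hexp hQle (abs_nonneg _) (Real.exp_pos _).le
  -- per-y tsum bound
  have hFle : ∀ y : γ, (∑' x, F x y) ≤ L / Real.sqrt (β - α) *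
      (Real.exp (-α * ‖(y : EuclideanSpace ℝ (Fin d))‖) * |z y|) := by
    intro y
    have h1y : (1:ℝ) ≤ 1 + ‖(y : EuclideanSpace ℝ (Fin d))‖ + ρ := by
      have := norm_nonneg (y : EuclideanSpace ℝ (Fin d)); linarith
    have hPnn : (0:ℝ) ≤ (𝒩 * Real.log (1 + ‖(y : EuclideanSpace ℝ (Fin d))‖ + ρ)) ^ q :=
      Real.rpow_nonneg (mul_nonneg h𝒩 (Real.log_nonneg h1y)) q
    have hBnn : (0:ℝ) ≤ Real.exp (ρ * β - β * ‖(y : EuclideanSpace ℝ (Fin d))‖) *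
        (C * (𝒩 * Real.log (1 + ‖(y : EuclideanSpace ℝ (Fin d))‖ + ρ)) ^ q) * |z y| := by
      have := (Real.exp_pos (ρ * β - β * ‖(y : EuclideanSpace ℝ (Fin d))‖)).le
      have h2 : (0:ℝ) ≤ C * (𝒩 * Real.log (1 + ‖(y : EuclideanSpace ℝ (Fin d))‖ + ρ)) ^ q :=
        mul_nonneg hC.le hPnn
      exact mul_nonneg (mul_nonneg this h2) (abs_nonneg _)
    have hkey := auxKey C q 𝒩 ρ amax α β s ‖(y : EuclideanSpace ℝ (Fin d))‖ hC hq h𝒩 hρ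
      hs_def hαpos hαβ hβmax (norm_nonneg _)
    rw [← hL_def] at hkey
    calc (∑' x, F x y) = ∑ x ∈ (hball (y : EuclideanSpace ℝ (Fin d))).toFinset, F x y :=
          tsum_eq_sum (hF0 y)
      _ ≤ (hball (y : EuclideanSpace ℝ (Fin d))).toFinset.card •
            (Real.exp (ρ * β - β * ‖(y : EuclideanSpace ℝ (Fin d))‖) *
              (C * (𝒩 * Real.log (1 + ‖(y : EuclideanSpace ℝ (Fin d))‖ + ρ)) ^ q) * |z y|) :=
          Finset.sum_le_card_nsmul _ _ _ (fun x hx => hpair y x hx)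
      _ = ((hball (y : EuclideanSpace ℝ (Fin d))).toFinset.card : ℝ) *
            (Real.exp (ρ * β - β * ‖(y : EuclideanSpace ℝ (Fin d))‖) *
              (C * (𝒩 * Real.log (1 + ‖(y : EuclideanSpace ℝ (Fin d))‖ + ρ)) ^ q) * |z y|) :=
          nsmul_eq_mul _ _
      _ ≤ (𝒩 * Real.log (1 + ‖(y : EuclideanSpace ℝ (Fin d))‖)) *
            (Real.exp (ρ * β - β * ‖(y : EuclideanSpace ℝ (Fin d))‖) *
              (C * (𝒩 * Real.log (1 + ‖(y : EuclideanSpace ℝ (Fin d))‖ + ρ)) ^ q) * |z y|) := by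
          refine mul_le_mul_of_nonneg_right ?_ hBnn
          rw [hcard]
          exact hn _ y.2
      _ = (𝒩 * Real.log (1 + ‖(y : EuclideanSpace ℝ (Fin d))‖)) *
            (Real.exp (ρ * β - β * ‖(y : EuclideanSpace ℝ (Fin d))‖) *
              (C * (𝒩 * Real.log (1 + ‖(y : EuclideanSpace ℝ (Fin d))‖ + ρ)) ^ q)) * |z y| := by
          ring
      _ ≤ L / Real.sqrt (β - α) * Real.exp (-α * ‖(y : EuclideanSpace ℝ (Fin d))‖) * |z y| :=
          mul_le_mul_of_nonneg_right hkey (abs_nonneg _)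
      _ = L / Real.sqrt (β - α) *
            (Real.exp (-α * ‖(y : EuclideanSpace ℝ (Fin d))‖) * |z y|) := by ring
  -- summability bookkeeping
  have hG : Summable (fun y : γ => L / Real.sqrt (β - α) *
      (Real.exp (-α * ‖(y : EuclideanSpace ℝ (Fin d))‖) * |z y|)) := hz.mul_left _
  have htsum_nn : ∀ y : γ, 0 ≤ ∑' x, F x y := fun y => tsum_nonneg (fun x => hFnn x y)
  have hsum_inner : Summable (fun y : γ => ∑' x, F x y) :=
    Summable.of_nonneg_of_le htsum_nn hFle hG
  have hswapped : Summable (fun p : γ × γ => F p.2 p.1) := by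
    refine (summable_prod_of_nonneg (fun p => hFnn p.2 p.1)).2 ⟨fun y => hsumx y, ?_⟩
    exact hsum_inner
  have huncurry : Summable (Function.uncurry F) := hswapped.prod_symm
  have hsumy : ∀ x : γ, Summable (fun y => Q x y * z y) := by
    intro x
    refine summable_of_ne_finset_zero
      (s := (hball (x : EuclideanSpace ℝ (Fin d))).toFinset) ?_
    intro y hy
    have : (y : EuclideanSpace ℝ (Fin d)) ∉
        closedBall (x : EuclideanSpace ℝ (Fin d)) ρ := by
      simpa using hy
    rw [hQ0 x y this, zero_mul]
  have hsumabs : ∀ x : γ, Summable (fun y => |Q x y * z y|) := fun x =>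
    (hsumy x).abs
  have htarget_le : ∀ x : γ, Real.exp (-β * ‖(x : EuclideanSpace ℝ (Fin d))‖) *
      |∑' y, Q x y * z y| ≤ ∑' y, F x y := by
    intro x
    have habs : |∑' y, Q x y * z y| ≤ ∑' y, |Q x y * z y| := by
      calc |∑' y, Q x y * z y| = ‖∑' y, Q x y * z y‖ := (Real.norm_eq_abs _).symm
        _ ≤ ∑' y, ‖Q x y * z y‖ := norm_tsum_le_tsum_norm (by
            simpa only [Real.norm_eq_abs] using hsumabs x)
        _ = ∑' y, |Q x y * z y| := by simp only [Real.norm_eq_abs]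
    calc Real.exp (-β * ‖(x : EuclideanSpace ℝ (Fin d))‖) * |∑' y, Q x y * z y|
        ≤ Real.exp (-β * ‖(x : EuclideanSpace ℝ (Fin d))‖) * ∑' y, |Q x y * z y| :=
          mul_le_mul_of_nonneg_left habs (Real.exp_pos _).le
      _ = ∑' y, F x y := by
          simp only [hF]
          exact (tsum_mul_left).symm
  have hsum_outer : Summable (fun x : γ => ∑' y, F x y) :=
    ((summable_prod_of_nonneg (fun p => hFnn p.1 p.2)).1 huncurry).2
  have htarget_nn : ∀ x : γ, 0 ≤ Real.exp (-β * ‖(x : EuclideanSpace ℝ (Fin d))‖) *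
      |∑' y, Q x y * z y| := fun x => by positivity
  have hTsummable : Summable (fun x : γ =>
      Real.exp (-β * ‖(x : EuclideanSpace ℝ (Fin d))‖) * |∑' y : γ, Q x y * z y|) :=
    Summable.of_nonneg_of_le htarget_nn htarget_le hsum_outer
  refine ⟨hTsummable, ?_⟩
  calc (∑' x : γ, Real.exp (-β * ‖(x : EuclideanSpace ℝ (Fin d))‖) * |∑' y : γ, Q x y * z y|)
      ≤ ∑' x, ∑' y, F x y := Summable.tsum_le_tsum htarget_le hTsummable hsum_outer
    _ = ∑' y, ∑' x, F x y := (Summable.tsum_comm huncurry).symm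
    _ ≤ ∑' y : γ, L / Real.sqrt (β - α) *
          (Real.exp (-α * ‖(y : EuclideanSpace ℝ (Fin d))‖) * |z y|) :=
        Summable.tsum_le_tsum hFle hsum_inner hG
    _ = L / Real.sqrt (β - α) *
          ∑' x : γ, Real.exp (-α * ‖(x : EuclideanSpace ℝ (Fin d))‖) * |z x| := tsum_mul_left
end

section
/- Let {X_𝔞}_{𝔞∈[𝔞₋,𝔞₊]} (0 < 𝔞₋ < 𝔞₊) be a scale of Banach spaces, let F be an Ovsjannikov map of order q ≥ 0 and constant L > 0 on this scale, fix T > 0 and x₀ ∈ X_{𝔞₋}, and for a continuous map f : [0,T] → X_α define ℐ(f)(t) = x₀ + ∫₀ᵗ F(f(s)) ds (Bochner integral in X_β). Then for all 𝔞₋ ≤ α < β ≤ 𝔞₊ and all continuous f, g : [0,T] → X_α: ℐ(f) is a continuous map [0,T] → X_β, and sup_{t∈[0,T]} ‖ℐ(f)(t) − ℐ(g)(t)‖_{X_β} ≤ (LT/(β−α)^q) · sup_{t∈[0,T]} ‖f(t) − g(t)‖_{X_α}. In other words, ℐ is an Ovsjannikov map of order q and constant LT on the scale of Banach spaces {C([0,T],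 X_𝔞)}_{𝔞∈[𝔞₋,𝔞₊]} equipped with supremum norms. -/
open MeasureTheory Set Filter ENNReal

noncomputable section

/-- `f : [0,T] → X_a` is continuous, where `X_a` is the subspace of the ambient Banach
space `E` on which the extended norm `N a` is finite, with the metric induced by `N a`. -/
def ScaleContOn {E : Type*} [NormedAddCommGroup E]
    (N : ℝ → E → ℝ≥0∞) (a T : ℝ) (f : ℝ → E) : Prop :=
  (∀ t ∈ Icc (0 : ℝ) T, N a (f t) ≠ ⊤) ∧
  ∀ t₀ ∈ Icc (0 : ℝ) T,
    Tendsto (fun t => N a (f t - f t₀)) (nhdsWithin t₀ (Icc (0 : ℝ) T)) (nhds 0)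

/-- The map `ℐ(f)(t) = x₀ + ∫₀ᵗ F(f(s)) ds` (Bochner integral in the ambient space). -/
def Imap {E : Type*} [NormedAddCommGroup E] [NormedSpace ℝ E] [CompleteSpace E]
    (F : E → E) (x₀ : E) (f : ℝ → E) : ℝ → E :=
  fun t => x₀ + ∫ s in (0 : ℝ)..t, F (f s)

namespace Statement10Aux

variable {E : Type*} [NormedAddCommGroup E] [NormedSpace ℝ E]

structure GoodNorm (N : E → ℝ≥0∞) : Prop where
  norm_le : ∀ x : E, (‖x‖₊ : ℝ≥0∞) ≤ N x
  zero : N 0 = 0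
  add : ∀ x y : E, N (x + y) ≤ N x + N y
  smul : ∀ (c : ℝ) (x : E), N (c • x) = (‖c‖₊ : ℝ≥0∞) * N x
  complete : ∀ u : ℕ → E, (∀ n, N (u n) ≠ ⊤) →
    (∀ ε : ℝ≥0∞, 0 < ε → ∃ K : ℕ, ∀ m ≥ K, ∀ n ≥ K, N (u m - u n) < ε) →
    ∃ x : E, N x ≠ ⊤ ∧ Tendsto (fun n => N (u n - x)) atTop (nhds 0)

variable {N : E → ℝ≥0∞}

theorem GoodNorm.neg (h : GoodNorm N) (x : E) : N (-x) = N x := by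
  rw [← neg_one_smul ℝ x, h.smul]; simp

theorem GoodNorm.add_ne_top (h : GoodNorm N) {x y : E} (hx : N x ≠ ⊤) (hy : N y ≠ ⊤) :
    N (x + y) ≠ ⊤ :=
  ((h.add x y).trans_lt (ENNReal.add_lt_top.2 ⟨hx.lt_top, hy.lt_top⟩)).ne

def Dom (_h : GoodNorm N) : Type _ := {x : E // N x ≠ ⊤}

namespace Dom

variable (h : GoodNorm N)

/-- Constructor keeping the type `Dom h` syntactically. -/
def mk {x : E} (hx : N x ≠ ⊤) : Dom h := ⟨x, hx⟩

theorem mk_coe {x : E} (hx : N x ≠ ⊤) : (mk h hx).1 = x := rfl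

instance : Zero (Dom h) := ⟨⟨0, by simp [h.zero]⟩⟩

instance : Add (Dom h) := ⟨fun x y => ⟨x.1 + y.1, h.add_ne_top x.2 y.2⟩⟩
instance : Neg (Dom h) := ⟨fun x => ⟨-x.1, by rw [h.neg]; exact x.2⟩⟩
instance : Sub (Dom h) :=
  ⟨fun x y => ⟨x.1 - y.1, by
    rw [sub_eq_add_neg]
    exact h.add_ne_top x.2 (by rw [h.neg]; exact y.2)⟩⟩
instance : SMul ℝ (Dom h) :=
  ⟨fun c x => ⟨c • x.1, by rw [h.smul]; exact ENNReal.mul_ne_top ENNReal.coe_ne_top x.2⟩⟩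
instance : SMul ℕ (Dom h) :=
  ⟨fun n x => ⟨n • x.1, by
    rw [← Nat.cast_smul_eq_nsmul ℝ, h.smul]
    exact ENNReal.mul_ne_top ENNReal.coe_ne_top x.2⟩⟩
instance : SMul ℤ (Dom h) :=
  ⟨fun n x => ⟨n • x.1, by
    rw [← Int.cast_smul_eq_zsmul ℝ, h.smul]
    exact ENNReal.mul_ne_top ENNReal.coe_ne_top x.2⟩⟩

instance : AddCommGroup (Dom h) :=
  Function.Injective.addCommGroup (fun x : Dom h => x.1) Subtype.coe_injective rfl
    (fun _ _ => rfl) (fun _ => rfl) (fun _ _ => rfl) (fun _ _ => rfl) (fun _ _ => rfl)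

theorem coe_zero : (0 : Dom h).1 = 0 := rfl
theorem coe_add (x y : Dom h) : (x + y).1 = x.1 + y.1 := rfl
theorem coe_neg (x : Dom h) : (-x).1 = -x.1 := rfl

def coeHom : Dom h →+ E :=
  { toFun := fun x => x.1, map_zero' := rfl, map_add' := fun _ _ => rfl }

instance : Module ℝ (Dom h) :=
  Function.Injective.module ℝ (coeHom h) Subtype.coe_injective (fun _ _ => rfl)

instance : NormedAddCommGroup (Dom h) :=
  AddGroupNorm.toNormedAddCommGroup
    { toFun := fun x => (N x.1).toReal
      map_zero' := by show (N (0 : Dom h).1).toReal = 0; rw [coe_zero, h.zero]; rfl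
      add_le' := fun x y => by
        calc (N (x.1 + y.1)).toReal ≤ (N x.1 + N y.1).toReal :=
              ENNReal.toReal_mono (by simp [ENNReal.add_ne_top, x.2, y.2]) (h.add x.1 y.1)
          _ = (N x.1).toReal + (N y.1).toReal := ENNReal.toReal_add x.2 y.2
      neg' := fun x => by show (N (-x).1).toReal = _; rw [coe_neg h, h.neg]
      eq_zero_of_map_eq_zero' := fun x hx => by
        have h0 : N x.1 = 0 := by
          rcases (ENNReal.toReal_eq_zero_iff _).1 hx with h0 | h0
          · exact h0
          · exact absurd h0 x.2
        have : (‖x.1‖₊ : ℝ≥0∞) = 0 := le_antisymm (h0 ▸ h.norm_le x.1) (zero_le)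
        have : x.1 = 0 := by simpa using this
        exact Subtype.ext this }

theorem norm_def (x : Dom h) : ‖x‖ = (N x.1).toReal := rfl

theorem coe_sub (x y : Dom h) : (x - y).1 = x.1 - y.1 := rfl

theorem n_eq (x : Dom h) : N x.1 = ENNReal.ofReal ‖x‖ := by
  rw [norm_def, ENNReal.ofReal_toReal x.2]

instance : NormedSpace ℝ (Dom h) :=
  ⟨fun c x => by
    rw [norm_def, norm_def]
    have : (c • x).1 = c • x.1 := rfl
    rw [this, h.smul, ENNReal.toReal_mul]
    simp⟩

instance : CompleteSpace (Dom h) := by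
  apply Metric.complete_of_cauchySeq_tendsto
  intro u hu
  rw [Metric.cauchySeq_iff] at hu
  have key : ∀ ε : ℝ≥0∞, 0 < ε → ∃ K : ℕ, ∀ m ≥ K, ∀ n ≥ K, N ((u m).1 - (u n).1) < ε := by
    intro ε hε
    have hmt : min ε 1 ≠ ⊤ := ne_top_of_le_ne_top ENNReal.one_ne_top (min_le_right _ _)
    have hpos : 0 < (min ε 1).toReal :=
      ENNReal.toReal_pos (lt_min hε zero_lt_one).ne' hmt
    obtain ⟨K, hK⟩ := hu _ hpos
    refine ⟨K, fun m hm n hn => ?_⟩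
    have hd := hK m hm n hn
    rw [dist_eq_norm, norm_def, coe_sub] at hd
    have : N ((u m).1 - (u n).1) < ENNReal.ofReal (min ε 1).toReal :=
      (ENNReal.lt_ofReal_iff_toReal_lt (u m - u n).2).2 hd
    calc N ((u m).1 - (u n).1) < ENNReal.ofReal (min ε 1).toReal := this
      _ = min ε 1 := ENNReal.ofReal_toReal hmt
      _ ≤ ε := min_le_left _ _
  obtain ⟨x, hx, hconv⟩ := h.complete (fun n => (u n).1) (fun n => (u n).2) key
  refine ⟨Dom.mk h hx, tendsto_iff_dist_tendsto_zero.2 ?_⟩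
  have : ∀ n, dist (u n) (Dom.mk h hx) = (N ((u n).1 - x)).toReal := fun n => by
    rw [dist_eq_norm, norm_def, coe_sub, mk_coe]
  simp only [this]
  simpa [Function.comp_def] using (ENNReal.tendsto_toReal (by simp)).comp hconv

def incl : Dom h →L[ℝ] E :=
  LinearMap.mkContinuous
    { toFun := fun x => x.1, map_add' := fun _ _ => rfl, map_smul' := fun _ _ => rfl } 1
    (fun x => by
      rw [one_mul, norm_def]
      calc ‖x.1‖ = ((‖x.1‖₊ : ℝ≥0∞)).toReal := by simp
        _ ≤ (N x.1).toReal := ENNReal.toReal_mono x.2 (h.norm_le x.1))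

theorem incl_apply (x : Dom h) : incl h x = x.1 := rfl

end Dom

theorem contOn_lift (h : GoodNorm N) {T : ℝ} {f : ℝ → E}
    (hfin : ∀ t ∈ Icc (0 : ℝ) T, N (f t) ≠ ⊤)
    (hcont : ∀ t₀ ∈ Icc (0 : ℝ) T,
      Tendsto (fun t => N (f t - f t₀)) (nhdsWithin t₀ (Icc (0 : ℝ) T)) (nhds 0)) :
    ContinuousOn (fun t => if hx : N (f t) ≠ ⊤ then Dom.mk h hx else (0 : Dom h))
      (Icc (0 : ℝ) T) := by
  intro t₀ ht₀
  set lift := fun t => if hx : N (f t) ≠ ⊤ then Dom.mk h hx else (0 : Dom h) with hlift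
  refine tendsto_iff_dist_tendsto_zero.2 ?_
  have hev : (fun t => (N (f t - f t₀)).toReal) =ᶠ[nhdsWithin t₀ (Icc (0 : ℝ) T)]
      fun t => dist (lift t) (lift t₀) := by
    filter_upwards [self_mem_nhdsWithin] with t ht
    rw [dist_eq_norm, Dom.norm_def, Dom.coe_sub]
    have e1 : (lift t).1 = f t := by rw [hlift]; simp only [dif_pos (hfin t ht)]; rfl
    have e2 : (lift t₀).1 = f t₀ := by rw [hlift]; simp only [dif_pos (hfin t₀ ht₀)]; rfl
    rw [e1, e2]
  refine Tendsto.congr' hev ?_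
  simpa [Function.comp_def] using (ENNReal.tendsto_toReal (a := 0) (by simp)).comp (hcont t₀ ht₀)

end Statement10Aux

open Statement10Aux in
theorem statement10
    -- the scale of Banach spaces, realised inside the ambient space `E = X_{amax}`
    (E : Type*) [NormedAddCommGroup E] [NormedSpace ℝ E] [CompleteSpace E]
    (amin amax : ℝ) (hamin : 0 < amin) (hminmax : amin < amax)
    (N : ℝ → E → ℝ≥0∞)
    (htop : ∀ x : E, N amax x = (‖x‖₊ : ℝ≥0∞))
    (hmono : ∀ a b : ℝ, amin ≤ a → a ≤ b → b ≤ amax → ∀ x : E, N b x ≤ N a x)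
    (hzero : ∀ a : ℝ, amin ≤ a → a ≤ amax → N a 0 = 0)
    (hadd : ∀ a : ℝ, amin ≤ a → a ≤ amax → ∀ x y : E, N a (x + y) ≤ N a x + N a y)
    (hsmul : ∀ a : ℝ, amin ≤ a → a ≤ amax → ∀ (c : ℝ) (x : E),
      N a (c • x) = (‖c‖₊ : ℝ≥0∞) * N a x)
    (hcomplete : ∀ a : ℝ, amin ≤ a → a ≤ amax → ∀ u : ℕ → E,
      (∀ n, N a (u n) ≠ ⊤) →
      (∀ ε : ℝ≥0∞, 0 < ε → ∃ K : ℕ, ∀ m ≥ K, ∀ n ≥ K, N a (u m - u n) < ε) →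
      ∃ x : E, N a x ≠ ⊤ ∧ Tendsto (fun n => N a (u n - x)) atTop (nhds 0))
    -- the Ovsjannikov map `F` of order `q` and constant `L`
    (q L : ℝ) (hq : 0 ≤ q) (hL : 0 < L) (F : E → E)
    (hFmap : ∀ a b : ℝ, amin ≤ a → a < b → b ≤ amax → ∀ x : E,
      N a x ≠ ⊤ → N b (F x) ≠ ⊤)
    (hFlip : ∀ a b : ℝ, amin ≤ a → a < b → b ≤ amax → ∀ x y : E,
      N a x ≠ ⊤ → N a y ≠ ⊤ →
      N b (F x - F y) ≤ ENNReal.ofReal (L / (b - a) ^ q) * N a (x - y))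
    (T : ℝ) (hT : 0 < T) (x₀ : E) (hx₀ : N amin x₀ ≠ ⊤) :
    ∀ α β : ℝ, amin ≤ α → α < β → β ≤ amax →
      ∀ f g : ℝ → E, ScaleContOn N α T f → ScaleContOn N α T g →
        ScaleContOn N β T (Imap F x₀ f) ∧
        (⨆ t ∈ Icc (0 : ℝ) T, N β (Imap F x₀ f t - Imap F x₀ g t)) ≤
          ENNReal.ofReal (L * T / (β - α) ^ q) *
            ⨆ t ∈ Icc (0 : ℝ) T, N α (f t - g t) := by
  intro α β hαin hαβ hβin f g hf hg
  have hβin' : amin ≤ β := hαin.trans hαβ.le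
  have hαmax : α ≤ amax := hαβ.le.trans hβin
  have mkgn : ∀ γ : ℝ, amin ≤ γ → γ ≤ amax → GoodNorm (N γ) := fun γ h1 h2 =>
    { norm_le := fun x => by rw [← htop x]; exact hmono γ amax h1 h2 le_rfl x
      zero := hzero γ h1 h2
      add := hadd γ h1 h2
      smul := hsmul γ h1 h2
      complete := hcomplete γ h1 h2 }
  have gA : GoodNorm (N α) := mkgn α hαin hαmax
  have gB : GoodNorm (N β) := mkgn β hβin' hβin
  -- positivity facts
  have hpow : (0 : ℝ) < (β - α) ^ q := Real.rpow_pos_of_pos (sub_pos.2 hαβ) q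
  have hCpos : (0 : ℝ) < L / (β - α) ^ q := div_pos hL hpow
  -- lifted curves
  set fl : ℝ → Dom gA := fun t => if hx : N α (f t) ≠ ⊤ then Dom.mk gA hx else (0 : Dom gA) with hfl
  set gl : ℝ → Dom gA := fun t => if hx : N α (g t) ≠ ⊤ then Dom.mk gA hx else (0 : Dom gA) with hgl
  have flcont : ContinuousOn fl (Icc 0 T) := contOn_lift gA hf.1 hf.2
  have glcont : ContinuousOn gl (Icc 0 T) := contOn_lift gA hg.1 hg.2
  have flcoe : ∀ t ∈ Icc (0 : ℝ) T, (fl t).1 = f t := fun t ht => by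
    rw [hfl]; simp only [dif_pos (hf.1 t ht)]; rfl
  have glcoe : ∀ t ∈ Icc (0 : ℝ) T, (gl t).1 = g t := fun t ht => by
    rw [hgl]; simp only [dif_pos (hg.1 t ht)]; rfl
  -- lifted Ovsjannikov map
  set Fl : Dom gA → Dom gB := fun x => Dom.mk gB (hFmap α β hαin hαβ hβin x.1 x.2) with hFld
  have Fllip : LipschitzWith (Real.toNNReal (L / (β - α) ^ q)) Fl := by
    rw [lipschitzWith_iff_dist_le_mul]
    intro x y
    rw [dist_eq_norm, dist_eq_norm, Dom.norm_def, Dom.norm_def, Dom.coe_sub, Dom.coe_sub]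
    have hxy : N α (x.1 - y.1) ≠ ⊤ := by rw [← Dom.coe_sub]; exact (x - y).2
    calc (N β ((Fl x).1 - (Fl y).1)).toReal
        = (N β (F x.1 - F y.1)).toReal := rfl
      _ ≤ (ENNReal.ofReal (L / (β - α) ^ q) * N α (x.1 - y.1)).toReal :=
          ENNReal.toReal_mono (ENNReal.mul_ne_top ENNReal.ofReal_ne_top hxy)
            (hFlip α β hαin hαβ hβin x.1 y.1 x.2 y.2)
      _ = (L / (β - α) ^ q) * (N α (x.1 - y.1)).toReal := by
          rw [ENNReal.toReal_mul, ENNReal.toReal_ofReal hCpos.le]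
      _ = (Real.toNNReal (L / (β - α) ^ q) : ℝ) * (N α (x.1 - y.1)).toReal := by
          rw [Real.coe_toNNReal _ hCpos.le]
  -- integrability and continuity of primitives
  have hflcont : ContinuousOn (fun s => Fl (fl s)) (Icc 0 T) :=
    Fllip.continuous.comp_continuousOn flcont
  have hglcont : ContinuousOn (fun s => Fl (gl s)) (Icc 0 T) :=
    Fllip.continuous.comp_continuousOn glcont
  have hflint : IntegrableOn (fun s => Fl (fl s)) (Icc 0 T) volume := hflcont.integrableOn_Icc
  have hglint : IntegrableOn (fun s => Fl (gl s)) (Icc 0 T) volume := hglcont.integrableOn_Icc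
  have hii : ∀ u : ℝ → Dom gB, IntegrableOn u (Icc 0 T) volume →
      ∀ t ∈ Icc (0 : ℝ) T, IntervalIntegrable u volume 0 t := by
    intro u hu t ht
    refine IntegrableOn.intervalIntegrable (hu.mono_set ?_)
    rw [uIcc_of_le ht.1]
    exact Icc_subset_Icc le_rfl ht.2
  have Ifcont : ContinuousOn (fun t => ∫ s in (0 : ℝ)..t, Fl (fl s)) (Icc 0 T) := by
    have := intervalIntegral.continuousOn_primitive_interval (a := 0) (b := T)
      (μ := volume) (f := fun s => Fl (fl s)) (by rwa [uIcc_of_le hT.le])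
    rwa [uIcc_of_le hT.le] at this
  -- the lifted Imap
  have hx₀β : N β x₀ ≠ ⊤ := ne_top_of_le_ne_top hx₀ (hmono amin β le_rfl hβin' hβin x₀)
  set x₀l : Dom gB := Dom.mk gB hx₀β with hx₀l
  set Gf : ℝ → Dom gB := fun t => x₀l + ∫ s in (0 : ℝ)..t, Fl (fl s) with hGf
  set Gg : ℝ → Dom gB := fun t => x₀l + ∫ s in (0 : ℝ)..t, Fl (gl s) with hGg
  have Gfcont : ContinuousOn Gf (Icc 0 T) := continuousOn_const.add Ifcont
  have keygen : ∀ (k : ℝ → E) (kl : ℝ → Dom gA),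
      (∀ t ∈ Icc (0 : ℝ) T, (kl t).1 = k t) →
      IntegrableOn (fun s => Fl (kl s)) (Icc 0 T) volume →
      ∀ t ∈ Icc (0 : ℝ) T,
      Imap F x₀ k t = (x₀l + ∫ s in (0 : ℝ)..t, Fl (kl s)).1 := by
    intro k kl kcoe kint t ht
    have hsub : Icc (0 : ℝ) t ⊆ Icc 0 T := Icc_subset_Icc le_rfl ht.2
    have hiit : IntervalIntegrable (fun s => Fl (kl s)) volume 0 t := hii _ kint t ht
    have comm := (Dom.incl gB).intervalIntegral_comp_comm hiit
    simp only [Imap]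
    have hc : (x₀l + ∫ s in (0 : ℝ)..t, Fl (kl s)).1
        = x₀ + ((∫ s in (0 : ℝ)..t, Fl (kl s)) : Dom gB).1 := rfl
    rw [hc, ← Dom.incl_apply gB, ← comm]
    congr 1
    apply intervalIntegral.integral_congr
    intro s hs
    rw [uIcc_of_le ht.1] at hs
    show F (k s) = ((Fl (kl s)).1 : E)
    show F (k s) = F ((kl s).1)
    rw [kcoe s (hsub hs)]
  have keyf : ∀ t ∈ Icc (0 : ℝ) T, Imap F x₀ f t = (Gf t).1 := keygen f fl flcoe hflint
  have keyg : ∀ t ∈ Icc (0 : ℝ) T, Imap F x₀ g t = (Gg t).1 := keygen g gl glcoe hglint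
  constructor
  · constructor
    · intro t ht
      rw [keyf t ht]
      exact (Gf t).2
    · intro t₀ ht₀
      have hd : Tendsto (fun t => dist (Gf t) (Gf t₀)) (nhdsWithin t₀ (Icc (0 : ℝ) T))
          (nhds 0) := tendsto_iff_dist_tendsto_zero.1 (Gfcont t₀ ht₀)
      have hof : Tendsto (fun t => ENNReal.ofReal (dist (Gf t) (Gf t₀)))
          (nhdsWithin t₀ (Icc (0 : ℝ) T)) (nhds 0) := by
        simpa [Function.comp_def] using (ENNReal.continuous_ofReal.tendsto 0).comp hd
      refine Tendsto.congr' ?_ hof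
      filter_upwards [self_mem_nhdsWithin] with t ht
      rw [dist_eq_norm, ← Dom.n_eq gB, Dom.coe_sub, ← keyf t ht, ← keyf t₀ ht₀]
  · set S := ⨆ t ∈ Icc (0 : ℝ) T, N α (f t - g t) with hSd
    have le_S : ∀ s ∈ Icc (0 : ℝ) T, N α (f s - g s) ≤ S := fun s hs =>
      le_iSup₂ (f := fun t (_ : t ∈ Icc (0 : ℝ) T) => N α (f t - g t)) s hs
    by_cases hStop : S = ⊤
    · rw [hStop, ENNReal.mul_top
        (ENNReal.ofReal_pos.2 (div_pos (mul_pos hL hT) hpow)).ne']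
      exact le_top
    · refine iSup₂_le fun t ht => ?_
      have hseq : Imap F x₀ f t - Imap F x₀ g t = (Gf t - Gg t).1 := by
        rw [keyf t ht, keyg t ht, Dom.coe_sub]
      rw [hseq, Dom.n_eq gB]
      have hifg : Gf t - Gg t = ∫ s in (0 : ℝ)..t, (Fl (fl s) - Fl (gl s)) := by
        rw [hGf, hGg]
        simp only
        rw [add_sub_add_left_eq_sub,
          ← intervalIntegral.integral_sub (hii _ hflint t ht) (hii _ hglint t ht)]
      have hnorm : ‖Gf t - Gg t‖ ≤ L / (β - α) ^ q * S.toReal * t := by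
        rw [hifg]
        have hb := intervalIntegral.norm_integral_le_of_norm_le_const
          (C := L / (β - α) ^ q * S.toReal) (a := 0) (b := t)
          (f := fun s => Fl (fl s) - Fl (gl s)) ?_
        · rwa [sub_zero, abs_of_nonneg ht.1, mul_comm (L / (β - α) ^ q * S.toReal) t,
            mul_comm t (L / (β - α) ^ q * S.toReal)] at hb
        · intro s hs
          have hsmem : s ∈ Icc (0 : ℝ) T := by
            rw [uIoc_of_le ht.1] at hs
            exact ⟨hs.1.le, hs.2.trans ht.2⟩
          rw [Dom.norm_def, Dom.coe_sub]
          have e : (Fl (fl s)).1 - (Fl (gl s)).1 = F (f s) - F (g s) := by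
            show F ((fl s).1) - F ((gl s).1) = _
            rw [flcoe s hsmem, glcoe s hsmem]
          rw [e]
          have hfin : N α (f s - g s) ≠ ⊤ := ne_top_of_le_ne_top hStop (le_S s hsmem)
          calc (N β (F (f s) - F (g s))).toReal
              ≤ (ENNReal.ofReal (L / (β - α) ^ q) * N α (f s - g s)).toReal :=
                ENNReal.toReal_mono (ENNReal.mul_ne_top ENNReal.ofReal_ne_top hfin)
                  (hFlip α β hαin hαβ hβin (f s) (g s) (hf.1 s hsmem) (hg.1 s hsmem))
            _ = L / (β - α) ^ q * (N α (f s - g s)).toReal := by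
                rw [ENNReal.toReal_mul, ENNReal.toReal_ofReal hCpos.le]
            _ ≤ L / (β - α) ^ q * S.toReal :=
                mul_le_mul_of_nonneg_left (ENNReal.toReal_mono hStop (le_S s hsmem)) hCpos.le
      calc ENNReal.ofReal ‖Gf t - Gg t‖
          ≤ ENNReal.ofReal (L / (β - α) ^ q * S.toReal * t) :=
            ENNReal.ofReal_le_ofReal hnorm
        _ ≤ ENNReal.ofReal (L * T / (β - α) ^ q * S.toReal) := by
            apply ENNReal.ofReal_le_ofReal
            have h1 : L / (β - α) ^ q * S.toReal * t ≤ L / (β - α) ^ q * S.toReal * T :=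
              mul_le_mul_of_nonneg_left ht.2 (mul_nonneg hCpos.le ENNReal.toReal_nonneg)
            calc L / (β - α) ^ q * S.toReal * t ≤ L / (β - α) ^ q * S.toReal * T := h1
              _ = L * T / (β - α) ^ q * S.toReal := by ring
        _ = ENNReal.ofReal (L * T / (β - α) ^ q) * ENNReal.ofReal S.toReal :=
            ENNReal.ofReal_mul (div_nonneg (mul_nonneg hL.le hT.le) hpow.le)
        _ = ENNReal.ofReal (L * T / (β - α) ^ q) * S := by rw [ENNReal.ofReal_toReal hStop]
end
end

section
/- Let {X_𝔞}_{𝔞∈[𝔞₋,𝔞₊]} be a scale of Banach spaces, F an Ovsjannikov map of order q ≥ 0 and constant L > 0, T > 0, x₀ ∈ X_{𝔞₋}, and ℐ(f)(t) = x₀ + ∫₀ᵗ F(f(s)) ds. Then for all 𝔞₋ < α < β < 𝔞₊, all continuous f, g : [0,T] → X_{𝔞₋}, and all n ∈ ℕ, sup_{t∈[0,T]} ‖ℐⁿ(f)(t) − ℐ^{n+1}(g)(t)‖_{X_β} ≤ (LⁿTⁿ n^{qn} / ((β−α)^{qn} n!)) · sup_{t∈[0,T]} ‖f(t) − ℐ(g)(t)‖_{X_α}.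 -/
open MeasureTheory Set Filter ENNReal

noncomputable section

set_option linter.unusedSectionVars false
set_option linter.unusedVariables false

namespace Stmt12

variable {E : Type*} [NormedAddCommGroup E] [NormedSpace ℝ E] [CompleteSpace E]

/-- extended seminorm axioms -/
structure IsENorm (ν : E → ℝ≥0∞) : Prop where
  zero : ν 0 = 0
  add : ∀ x y, ν (x + y) ≤ ν x + ν y
  smul : ∀ (c : ℝ) (x : E), ν (c • x) = (‖c‖₊ : ℝ≥0∞) * ν x

namespace IsENorm

variable {ν : E → ℝ≥0∞}

theorem neg (hν : IsENorm ν) (x : E) : ν (-x) = ν x := by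
  have : (-x) = (-1 : ℝ) • x := by simp
  rw [this, hν.smul]; simp

theorem sub_comm (hν : IsENorm ν) (x y : E) : ν (x - y) = ν (y - x) := by
  rw [← hν.neg (y - x)]; simp

theorem tri (hν : IsENorm ν) (x y z : E) : ν (x - z) ≤ ν (x - y) + ν (y - z) := by
  have : x - z = (x - y) + (y - z) := by abel
  rw [this]; exact hν.add _ _

theorem le_add (hν : IsENorm ν) (x y : E) : ν x ≤ ν (x - y) + ν y := by
  have : x = (x - y) + y := by abel
  nth_rewrite 1 [this]; exact hν.add _ _

theorem sum_le (hν : IsENorm ν) {ι : Type*} (s : Finset ι) (f : ι → E) :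
    ν (∑ i ∈ s, f i) ≤ ∑ i ∈ s, ν (f i) := by
  classical
  induction s using Finset.induction_on with
  | empty => simp [hν.zero]
  | insert _ _ hx ih =>
    rw [Finset.sum_insert hx, Finset.sum_insert hx]
    exact le_trans (hν.add _ _) (add_le_add_right ih _)

end IsENorm

/-- uniform continuity wrt extended seminorm ν on [0,T] -/
def SUC (ν : E → ℝ≥0∞) (T : ℝ) (f : ℝ → E) : Prop :=
  ∀ ε : ℝ≥0∞, 0 < ε → ∃ δ > (0:ℝ), ∀ s ∈ Icc (0:ℝ) T, ∀ t ∈ Icc (0:ℝ) T,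
    |s - t| < δ → ν (f s - f t) < ε

def SFin (ν : E → ℝ≥0∞) (T : ℝ) (f : ℝ → E) : Prop :=
  ∀ t ∈ Icc (0:ℝ) T, ν (f t) ≠ ⊤

/-- pointwise continuity + compactness gives uniform continuity -/
theorem suc_of_pointwise {ν : E → ℝ≥0∞} (hν : IsENorm ν) {T : ℝ} {f : ℝ → E}
    (hc : ∀ t₀ ∈ Icc (0:ℝ) T,
      Tendsto (fun t => ν (f t - f t₀)) (nhdsWithin t₀ (Icc (0:ℝ) T)) (nhds 0)) :
    SUC ν T f := by
  intro ε hε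
  rcases isEmpty_or_nonempty (Icc (0:ℝ) T) with hemp | hne
  · refine ⟨1, one_pos, fun s hs => ?_⟩
    exact absurd hs (by simpa using hemp.elim' ⟨s, hs⟩)
  have hε2 : (0:ℝ≥0∞) < ε / 2 := ENNReal.half_pos hε.ne'
  -- choose δ at each point
  have key : ∀ t₀ ∈ Icc (0:ℝ) T, ∃ δ > (0:ℝ),
      ∀ t ∈ Icc (0:ℝ) T, |t - t₀| < δ → ν (f t - f t₀) < ε / 2 := by
    intro t₀ ht₀
    have := (hc t₀ ht₀) (Iio_mem_nhds hε2)
    rw [mem_map, Metric.mem_nhdsWithin_iff] at this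
    obtain ⟨δ, hδ, hsub⟩ := this
    refine ⟨δ, hδ, fun t ht hlt => ?_⟩
    exact hsub ⟨by simpa [Metric.mem_ball, Real.dist_eq] using hlt, ht⟩
  choose! δ hδpos hδ using key
  -- compactness
  obtain ⟨s, hs_sub, hs_cov⟩ := isCompact_Icc.elim_nhds_subcover
    (fun t₀ => Metric.ball t₀ (δ t₀ / 2))
    (fun t₀ ht₀ => Metric.ball_mem_nhds _ (by linarith [hδpos t₀ ht₀]))
  have hsne : s.Nonempty := by
    rcases hne with ⟨⟨t, ht⟩⟩
    rcases mem_iUnion₂.mp (hs_cov ht) with ⟨i, hi, _⟩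
    exact ⟨i, hi⟩
  set δ₀ := s.inf' hsne (fun t => δ t / 2) with hδ₀def
  have hδ₀pos : 0 < δ₀ := by
    rw [hδ₀def, Finset.lt_inf'_iff]
    exact fun t ht => by linarith [hδpos t (hs_sub t ht)]
  refine ⟨δ₀, hδ₀pos, fun a ha b hb hab => ?_⟩
  rcases mem_iUnion₂.mp (hs_cov ha) with ⟨i, hi, hai⟩
  have hiI : i ∈ Icc (0:ℝ) T := hs_sub i hi
  have h1 : |a - i| < δ i := by
    have := Metric.mem_ball.mp hai
    rw [Real.dist_eq] at this
    linarith [abs_nonneg (a - i)]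
  have hδ₀le : δ₀ ≤ δ i / 2 := Finset.inf'_le _ hi
  have h2 : |b - i| < δ i := by
    have hai' := Metric.mem_ball.mp hai
    rw [Real.dist_eq] at hai'
    have htri : |b - i| ≤ |b - a| + |a - i| := abs_sub_le _ _ _
    have hba : |b - a| < δ₀ := by rwa [abs_sub_comm]
    linarith
  calc ν (f a - f b) ≤ ν (f a - f i) + ν (f i - f b) := hν.tri _ _ _
    _ < ε / 2 + ε / 2 := by
        refine ENNReal.add_lt_add (hδ i hiI a ha h1) ?_
        rw [hν.sub_comm]; exact hδ i hiI b hb h2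
    _ = ε := ENNReal.add_halves ε


/-- uniform continuity + finiteness gives a uniform bound -/
theorem bounded {ν : E → ℝ≥0∞} (hν : IsENorm ν) {T : ℝ} {f : ℝ → E} (hT : 0 ≤ T)
    (huc : SUC ν T f) (hfin : SFin ν T f) :
    ∃ C : ℝ, 0 ≤ C ∧ ∀ t ∈ Icc (0:ℝ) T, ν (f t) ≤ ENNReal.ofReal C := by
  obtain ⟨δ, hδpos, hδ⟩ := huc 1 one_pos
  have key : ∀ m : ℕ, ∀ t ∈ Icc (0:ℝ) T, t ≤ m * (δ/2) → ν (f t) ≤ ν (f 0) + m := by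
    intro m
    induction m with
    | zero =>
      intro t ht hle
      have h0 : t = 0 := le_antisymm (by simpa using hle) ht.1
      simp [h0]
    | succ m ih =>
      intro t ht hle
      by_cases hcase : t ≤ m * (δ/2)
      · refine (ih t ht hcase).trans ?_
        gcongr
        exact_mod_cast Nat.cast_le.mpr (Nat.le_succ m)
      · push_neg at hcase
        set t' := max 0 (t - δ/2) with ht'def
        have hmnn : (0:ℝ) ≤ m * (δ/2) := by positivity
        have ht'I : t' ∈ Icc (0:ℝ) T :=
          ⟨le_max_left _ _, max_le (le_trans (by linarith [ht.1]) ht.2) (by linarith [ht.2])⟩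
        have ht'le : t' ≤ m * (δ/2) := max_le hmnn (by push_cast at hle ⊢; linarith)
        have habs : |t - t'| < δ := by
          rw [abs_lt]
          constructor
          · have : t' ≤ t := max_le ht.1 (by linarith)
            linarith
          · have : t - δ/2 ≤ t' := le_max_right _ _
            linarith
        have h1 : ν (f t - f t') < 1 := hδ t ht t' ht'I habs
        calc ν (f t) ≤ ν (f t - f t') + ν (f t') := hν.le_add _ _
          _ ≤ 1 + (ν (f 0) + m) := add_le_add h1.le (ih t' ht'I ht'le)
          _ = ν (f 0) + (m + 1 : ℕ) := by push_cast; rw [add_comm 1, add_assoc]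
  obtain ⟨m, hm⟩ := exists_nat_ge (T / (δ/2))
  have hTm : T ≤ m * (δ/2) := by
    rw [div_le_iff₀ (by linarith)] at hm
    linarith
  have hfin0 : ν (f 0) + m ≠ ⊤ := by
    simp [ENNReal.add_ne_top, hfin 0 ⟨le_refl _, hT⟩, ENNReal.natCast_ne_top]
  refine ⟨(ν (f 0) + m).toReal, ENNReal.toReal_nonneg, fun t ht => ?_⟩
  rw [ENNReal.ofReal_toReal hfin0]
  exact key m t ht (le_trans ht.2 hTm)

theorem norm_lt_of_lt_ofReal {x : E} {ε : ℝ} {ν : E → ℝ≥0∞}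
    (hamb : ∀ y : E, (‖y‖₊ : ℝ≥0∞) ≤ ν y) (h : ν x < ENNReal.ofReal ε) : ‖x‖ < ε := by
  have h2 : (‖x‖₊ : ℝ≥0∞) < ENNReal.ofReal ε := lt_of_le_of_lt (hamb x) h
  have hε : 0 < ε := by
    by_contra hc
    push_neg at hc
    rw [ENNReal.ofReal_eq_zero.mpr hc] at h2
    exact absurd h2 (by simp)
  rw [ENNReal.ofReal, ENNReal.coe_lt_coe] at h2
  calc ‖x‖ = (‖x‖₊ : ℝ) := rfl
    _ < (ε.toNNReal : ℝ) := by exact_mod_cast h2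
    _ = ε := Real.coe_toNNReal _ hε.le

theorem contOn {ν : E → ℝ≥0∞} (hamb : ∀ y : E, (‖y‖₊ : ℝ≥0∞) ≤ ν y) {T : ℝ} {f : ℝ → E}
    (huc : SUC ν T f) : ContinuousOn f (Icc (0:ℝ) T) := by
  rw [Metric.continuousOn_iff]
  intro b hb ε hε
  obtain ⟨δ, hδpos, hδ⟩ := huc (ENNReal.ofReal ε) (ENNReal.ofReal_pos.mpr hε)
  refine ⟨δ, hδpos, fun a ha hab => ?_⟩
  have h1 := hδ a ha b hb (by rwa [Real.dist_eq] at hab)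
  rw [dist_eq_norm]
  exact norm_lt_of_lt_ofReal hamb h1

theorem sum_range_mul' {M : Type*} [AddCommMonoid M] (f : ℕ → M) (m n : ℕ) :
    ∑ i ∈ Finset.range (m * n), f i
      = ∑ i ∈ Finset.range m, ∑ j ∈ Finset.range n, f (i * n + j) := by
  induction m with
  | zero => simp
  | succ m ih =>
    rw [Nat.succ_mul, Finset.sum_range_add, ih, Finset.sum_range_succ]


theorem integral_bound {ν : E → ℝ≥0∞} (hν : IsENorm ν)
    (hamb : ∀ y : E, (‖y‖₊ : ℝ≥0∞) ≤ ν y)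
    (hcomp : ∀ w : ℕ → E, (∀ n, ν (w n) ≠ ⊤) →
      (∀ ε : ℝ≥0∞, 0 < ε → ∃ K : ℕ, ∀ m ≥ K, ∀ n ≥ K, ν (w m - w n) < ε) →
      ∃ x : E, ν x ≠ ⊤ ∧ Tendsto (fun n => ν (w n - x)) atTop (nhds 0))
    {T : ℝ} {h : ℝ → E} (huc : SUC ν T h) (hfin : SFin ν T h)
    {u v : ℝ} (h0u : 0 ≤ u) (huv : u ≤ v) (hvT : v ≤ T)
    {φ : ℝ → ℝ} (hφm : MonotoneOn φ (Icc u v)) (hφ0 : ∀ s ∈ Icc u v, 0 ≤ φ s)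
    (hφb : ∀ s ∈ Icc u v, ν (h s) ≤ ENNReal.ofReal (φ s)) :
    ν (∫ s in u..v, h s) ≤ ENNReal.ofReal (∫ s in u..v, φ s) := by
  have hcont : ContinuousOn h (Icc (0:ℝ) T) := contOn hamb huc
  have hvu : (0:ℝ) ≤ v - u := by linarith
  have hsub0T : Icc u v ⊆ Icc (0:ℝ) T := Icc_subset_Icc h0u hvT
  set Δ : ℕ → ℝ := fun m => (v - u) / (m:ℝ) with hΔdef
  set p : ℕ → ℕ → ℝ := fun m i => u + (i:ℝ) * Δ m with hpdef
  set R : ℕ → E := fun m => ∑ i ∈ Finset.range m, Δ m • h (p m i) with hRdef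
  have hΔnn : ∀ m : ℕ, 0 ≤ Δ m := fun m => div_nonneg hvu (Nat.cast_nonneg m)
  have hmΔ : ∀ m : ℕ, 1 ≤ m → (m:ℝ) * Δ m = v - u := by
    intro m hm
    have : (m:ℝ) ≠ 0 := Nat.cast_ne_zero.mpr (by omega)
    simp only [hΔdef]; field_simp
  have hp0 : ∀ m, p m 0 = u := by intro m; simp [hpdef]
  have hpm : ∀ m : ℕ, 1 ≤ m → p m m = v := by
    intro m hm; simp only [hpdef]; rw [hmΔ m hm]; ring
  have hpmono : ∀ m i, p m i ≤ p m (i+1) := by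
    intro m i
    simp only [hpdef]
    have := hΔnn m
    push_cast
    nlinarith
  have hpmem : ∀ m : ℕ, 1 ≤ m → ∀ i : ℕ, i ≤ m → p m i ∈ Icc u v := by
    intro m hm i him
    have h1 : 0 ≤ (i:ℝ) * Δ m := mul_nonneg (Nat.cast_nonneg i) (hΔnn m)
    refine ⟨by simp only [hpdef]; linarith, ?_⟩
    have h2 : (i:ℝ) * Δ m ≤ (m:ℝ) * Δ m :=
      mul_le_mul_of_nonneg_right (Nat.cast_le.mpr him) (hΔnn m)
    simp only [hpdef]
    linarith [hmΔ m hm]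
  have hInth : ∀ a b : ℝ, a ∈ Icc u v → b ∈ Icc u v → IntervalIntegrable h volume a b := by
    intro a b ha hb
    exact ((hcont.mono ((uIcc_subset_Icc ha hb).trans hsub0T)).intervalIntegrable)
  have hIntφ : ∀ a b : ℝ, a ∈ Icc u v → b ∈ Icc u v → IntervalIntegrable φ volume a b := by
    intro a b ha hb
    exact (hφm.mono (uIcc_subset_Icc ha hb)).intervalIntegrable
  -- Step 1 : bound on Riemann sums
  have hstep1 : ∀ m : ℕ, 1 ≤ m → ν (R m) ≤ ENNReal.ofReal (∫ s in u..v, φ s) := by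
    intro m hm
    have hpiece : ∀ i : ℕ, i < m →
        ν (Δ m • h (p m i)) ≤ ENNReal.ofReal (∫ s in (p m i)..(p m (i+1)), φ s) := by
      intro i hi
      have hpi : p m i ∈ Icc u v := hpmem m hm i hi.le
      have hpi1 : p m (i+1) ∈ Icc u v := hpmem m hm (i+1) hi
      have hc : ν (Δ m • h (p m i)) = ENNReal.ofReal (Δ m) * ν (h (p m i)) := by
        rw [hν.smul, show ((‖Δ m‖₊ : ℝ≥0∞)) = ENNReal.ofReal (Δ m) from Real.enorm_eq_ofReal (hΔnn m)]
      rw [hc]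
      calc ENNReal.ofReal (Δ m) * ν (h (p m i))
          ≤ ENNReal.ofReal (Δ m) * ENNReal.ofReal (φ (p m i)) := by
            gcongr; exact hφb _ hpi
        _ = ENNReal.ofReal (Δ m * φ (p m i)) := (ENNReal.ofReal_mul (hΔnn m)).symm
        _ ≤ ENNReal.ofReal (∫ s in (p m i)..(p m (i+1)), φ s) := by
            apply ENNReal.ofReal_le_ofReal
            have hconst : ∫ s in (p m i)..(p m (i+1)), φ (p m i)
                = (p m (i+1) - p m i) * φ (p m i) := by
              rw [intervalIntegral.integral_const]; simp [smul_eq_mul]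
            have hdiff : p m (i+1) - p m i = Δ m := by simp only [hpdef]; push_cast; ring
            have hmono2 : ∀ s ∈ Icc (p m i) (p m (i+1)), φ (p m i) ≤ φ s := by
              intro s hs
              exact hφm hpi (Icc_subset_Icc hpi.1 hpi1.2 hs) hs.1
            calc Δ m * φ (p m i) = ∫ s in (p m i)..(p m (i+1)), φ (p m i) := by
                  rw [hconst, hdiff]
              _ ≤ ∫ s in (p m i)..(p m (i+1)), φ s := by
                  apply intervalIntegral.integral_mono_on (hpmono m i)
                    intervalIntegrable_const (hIntφ _ _ hpi hpi1) hmono2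
    calc ν (R m) ≤ ∑ i ∈ Finset.range m, ν (Δ m • h (p m i)) := hν.sum_le _ _
      _ ≤ ∑ i ∈ Finset.range m, ENNReal.ofReal (∫ s in (p m i)..(p m (i+1)), φ s) :=
          Finset.sum_le_sum (fun i hi => hpiece i (Finset.mem_range.mp hi))
      _ = ENNReal.ofReal (∑ i ∈ Finset.range m, ∫ s in (p m i)..(p m (i+1)), φ s) := by
          rw [ENNReal.ofReal_sum_of_nonneg]
          intro i hi
          have hi' := Finset.mem_range.mp hi
          exact intervalIntegral.integral_nonneg (hpmono m i)
            (fun s hs => hφ0 s (Icc_subset_Icc (hpmem m hm i hi'.le).1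
              (hpmem m hm (i+1) hi').2 hs))
      _ = ENNReal.ofReal (∫ s in u..v, φ s) := by
          congr 1
          have := intervalIntegral.sum_integral_adjacent_intervals (a := fun i => p m i)
            (n := m) (f := φ) (μ := volume)
            (fun k hk => hIntφ _ _ (hpmem m hm k hk.le) (hpmem m hm (k+1) hk))
          simpa [hp0, hpm m hm] using this
  -- Step 2 : ambient convergence of Riemann sums to the integral
  have hstep2 : Tendsto (fun m : ℕ => R (m+1)) atTop (nhds (∫ s in u..v, h s)) := by
    rw [Metric.tendsto_atTop]
    intro ε hε
    set ε' := ε / (2*(v-u)+2) with hε'def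
    have hε'pos : 0 < ε' := by
      apply div_pos hε; linarith
    obtain ⟨δ, hδpos, hδ⟩ := huc (ENNReal.ofReal ε') (ENNReal.ofReal_pos.mpr hε'pos)
    obtain ⟨K, hK⟩ := exists_nat_gt ((v-u)/δ)
    refine ⟨K, fun m hm => ?_⟩
    set n := m + 1 with hndef
    have hn : 1 ≤ n := Nat.le_add_left 1 m
    have hmesh : Δ n < δ := by
      have hnpos : (0:ℝ) < n := by positivity
      rw [div_lt_iff₀ hnpos]
      have h1 : (v-u)/δ < (n:ℝ) := by
        have : (K:ℝ) ≤ m := Nat.cast_le.mpr hm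
        have : (m:ℝ) < n := by rw [hndef]; push_cast; linarith
        linarith
      rw [div_lt_iff₀ hδpos] at h1
      linarith
    have hdiffΔ : ∀ i : ℕ, p n (i+1) - p n i = Δ n := by
      intro i; simp only [hpdef]; push_cast; ring
    have hint_i : ∀ i < n, IntervalIntegrable h volume (p n i) (p n (i+1)) :=
      fun i hi => hInth _ _ (hpmem n hn i hi.le) (hpmem n hn (i+1) hi)
    have hIsum : (∫ s in u..v, h s)
        = ∑ i ∈ Finset.range n, ∫ s in (p n i)..(p n (i+1)), h s := by
      have := intervalIntegral.sum_integral_adjacent_intervals (a := fun i => p n i)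
        (f := h) (μ := volume) hint_i
      simpa [hp0, hpm n hn] using this.symm
    have hRsum : R n = ∑ i ∈ Finset.range n, ∫ s in (p n i)..(p n (i+1)),
        (fun _ => h (p n i)) s := by
      apply Finset.sum_congr rfl
      intro i _
      rw [intervalIntegral.integral_const, hdiffΔ i]
    have key : ‖(∫ s in u..v, h s) - R n‖ ≤ (v-u) * ε' := by
      rw [hIsum, hRsum, ← Finset.sum_sub_distrib]
      refine le_trans (norm_sum_le _ _) ?_
      have hterm : ∀ i ∈ Finset.range n,
          ‖(∫ s in (p n i)..(p n (i+1)), h s)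
            - ∫ s in (p n i)..(p n (i+1)), (fun _ => h (p n i)) s‖ ≤ ε' * Δ n := by
        intro i hi
        have hi' := Finset.mem_range.mp hi
        rw [← intervalIntegral.integral_sub (hint_i i hi') intervalIntegrable_const]
        have hb := intervalIntegral.norm_integral_le_of_norm_le_const (C := ε')
          (f := fun s => h s - h (p n i)) (a := p n i) (b := p n (i+1)) ?_
        · calc ‖∫ s in (p n i)..(p n (i+1)), (h s - h (p n i))‖
              ≤ ε' * |p n (i+1) - p n i| := hb
            _ = ε' * Δ n := by rw [hdiffΔ i, abs_of_nonneg (hΔnn n)]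
        · intro x hx
          rw [uIoc_of_le (hpmono n i)] at hx
          have hpiI : p n i ∈ Icc u v := hpmem n hn i hi'.le
          have hpi1I : p n (i+1) ∈ Icc u v := hpmem n hn (i+1) hi'
          have hxI : x ∈ Icc u v := ⟨le_trans hpiI.1 hx.1.le, hx.2.trans hpi1I.2⟩
          have hxd : |x - p n i| < δ := by
            rw [abs_of_nonneg (by linarith [hx.1.le] : (0:ℝ) ≤ x - p n i)]
            have h2 : x ≤ p n (i+1) := hx.2
            have h3 := hdiffΔ i
            linarith
          exact (norm_lt_of_lt_ofReal hamb
            (hδ x (hsub0T hxI) (p n i) (hsub0T hpiI) hxd)).le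
      calc ∑ i ∈ Finset.range n, ‖(∫ s in (p n i)..(p n (i+1)), h s)
              - ∫ s in (p n i)..(p n (i+1)), (fun _ => h (p n i)) s‖
          ≤ ∑ _i ∈ Finset.range n, ε' * Δ n := Finset.sum_le_sum hterm
        _ = (n:ℝ) * (ε' * Δ n) := by
            rw [Finset.sum_const, Finset.card_range, nsmul_eq_mul]
        _ = (v-u) * ε' := by
            rw [show (n:ℝ) * (ε' * Δ n) = ε' * ((n:ℝ) * Δ n) by ring, hmΔ n hn]; ring
    have hlt : (v-u)*ε' < ε := by
      rw [hε'def, mul_div_assoc', div_lt_iff₀ (by linarith : (0:ℝ) < 2*(v-u)+2)]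
      nlinarith
    calc dist (R n) (∫ s in u..v, h s) = ‖(∫ s in u..v, h s) - R n‖ := by
          rw [dist_eq_norm, norm_sub_rev]
      _ ≤ (v-u) * ε' := key
      _ < ε := hlt
  -- Step 3 : refinement comparison
  have hrefine : ∀ ε'' : ℝ≥0∞, 0 < ε'' → ∃ K : ℕ, 1 ≤ K ∧ ∀ m, K ≤ m → ∀ k : ℕ, 1 ≤ k →
      ν (R m - R (m * k)) ≤ ENNReal.ofReal (v - u) * ε'' := by
    intro ε'' hε''
    obtain ⟨δ, hδpos, hδ⟩ := huc ε'' hε''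
    obtain ⟨K₀, hK₀⟩ := exists_nat_gt ((v-u)/δ)
    refine ⟨K₀ + 1, Nat.le_add_left 1 K₀, fun m hm k hk => ?_⟩
    have hm1 : 1 ≤ m := le_trans (Nat.le_add_left 1 K₀) hm
    have hmk1 : 1 ≤ m * k := Nat.one_le_iff_ne_zero.mpr (Nat.mul_ne_zero (by omega) (by omega))
    have hmesh : Δ m < δ := by
      have hmpos : (0:ℝ) < m := by exact_mod_cast hm1
      rw [div_lt_iff₀ hmpos]
      have h1 : (v-u)/δ < (m:ℝ) := by
        have h2 : (K₀:ℝ) + 1 ≤ m := by exact_mod_cast hm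
        linarith
      rw [div_lt_iff₀ hδpos] at h1
      linarith
    have hΔ' : (k:ℝ) * Δ (m*k) = Δ m := by
      have hk0 : (k:ℝ) ≠ 0 := Nat.cast_ne_zero.mpr (by omega)
      simp only [hΔdef]
      push_cast
      field_simp
    have hRm : R m = ∑ i ∈ Finset.range m, ∑ _j ∈ Finset.range k,
        Δ (m*k) • h (p m i) := by
      apply Finset.sum_congr rfl
      intro i _
      rw [Finset.sum_const, Finset.card_range, ← Nat.cast_smul_eq_nsmul ℝ, smul_smul, hΔ']
    have hRmk : R (m*k) = ∑ i ∈ Finset.range m, ∑ j ∈ Finset.range k,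
        Δ (m*k) • h (p (m*k) (i*k+j)) :=
      sum_range_mul' (fun i => Δ (m*k) • h (p (m*k) i)) m k
    have hpt : ∀ i, i < m → ∀ j, j < k →
        ν (Δ (m*k) • h (p m i) - Δ (m*k) • h (p (m*k) (i*k+j)))
          ≤ ENNReal.ofReal (Δ (m*k)) * ε'' := by
      intro i hi j hj
      rw [← smul_sub, hν.smul, show ((‖Δ (m*k)‖₊ : ℝ≥0∞)) = ENNReal.ofReal (Δ (m*k)) from Real.enorm_eq_ofReal (hΔnn (m*k))]
      gcongr
      have hik : i*k+j ≤ m*k := by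
        have h1 : (i+1)*k ≤ m*k := Nat.mul_le_mul_right k hi
        have h2 : (i+1)*k = i*k + k := by ring
        omega
      have hm_i : p m i ∈ Icc u v := hpmem m hm1 i hi.le
      have hmk_ij : p (m*k) (i*k+j) ∈ Icc u v := hpmem (m*k) hmk1 (i*k+j) hik
      have hdist : |p m i - p (m*k) (i*k+j)| < δ := by
        have he : p m i - p (m*k) (i*k+j) = -((j:ℝ) * Δ (m*k)) := by
          simp only [hpdef]
          rw [← hΔ']
          push_cast
          ring
        rw [he, abs_neg, abs_of_nonneg (mul_nonneg (Nat.cast_nonneg j) (hΔnn (m*k)))]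
        have : (j:ℝ) * Δ (m*k) ≤ (k:ℝ) * Δ (m*k) :=
          mul_le_mul_of_nonneg_right (Nat.cast_le.mpr hj.le) (hΔnn (m*k))
        rw [hΔ'] at this
        linarith
      exact (hδ _ (hsub0T hm_i) _ (hsub0T hmk_ij) hdist).le
    calc ν (R m - R (m*k))
        = ν (∑ i ∈ Finset.range m, (∑ j ∈ Finset.range k,
            (Δ (m*k) • h (p m i) - Δ (m*k) • h (p (m*k) (i*k+j))))) := by
          rw [hRm, hRmk, ← Finset.sum_sub_distrib]
          congr 1
          apply Finset.sum_congr rfl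
          intro i _
          rw [← Finset.sum_sub_distrib]
      _ ≤ ∑ i ∈ Finset.range m, ∑ j ∈ Finset.range k,
            ν (Δ (m*k) • h (p m i) - Δ (m*k) • h (p (m*k) (i*k+j))) := by
          refine le_trans (hν.sum_le _ _) (Finset.sum_le_sum fun i _ => hν.sum_le _ _)
      _ ≤ ∑ _i ∈ Finset.range m, ∑ _j ∈ Finset.range k,
            ENNReal.ofReal (Δ (m*k)) * ε'' :=
          Finset.sum_le_sum (fun i hi => Finset.sum_le_sum (fun j hj =>
            hpt i (Finset.mem_range.mp hi) j (Finset.mem_range.mp hj)))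
      _ = ENNReal.ofReal (v - u) * ε'' := by
          rw [Finset.sum_const, Finset.sum_const, Finset.card_range, Finset.card_range,
            smul_smul, nsmul_eq_mul]
          rw [← mul_assoc]
          congr 1
          have : ((m * k : ℕ) : ℝ≥0∞) = ENNReal.ofReal ((m * k : ℕ) : ℝ) :=
            (ENNReal.ofReal_natCast _).symm
          rw [this, ← ENNReal.ofReal_mul (by positivity)]
          congr 1
          rw [← hmΔ (m*k) hmk1]
  -- Step 4 : Cauchy in ν
  have hcauchy : ∀ ε : ℝ≥0∞, 0 < ε → ∃ K : ℕ, ∀ a ≥ K, ∀ b ≥ K,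
      ν (R (a+1) - R (b+1)) < ε := by
    intro ε hε
    set ε₁ := min ε 1 with hε₁def
    have hε₁pos : 0 < ε₁ := lt_min hε one_pos
    have hε₁top : ε₁ ≠ ⊤ := ((min_le_right _ _).trans_lt (by simp)).ne
    have hε₁0 : ε₁ ≠ 0 := hε₁pos.ne'
    set c := ENNReal.ofReal (v - u) with hcdef
    have hcne : c ≠ ⊤ := ENNReal.ofReal_ne_top
    set ε'' := ε₁ / (4 * (c + 1)) with hε''def
    have hdtop : (4:ℝ≥0∞) * (c+1) ≠ ⊤ :=
      ENNReal.mul_ne_top (by simp) (ENNReal.add_ne_top.mpr ⟨hcne, ENNReal.one_ne_top⟩)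
    have hε''pos : 0 < ε'' := ENNReal.div_pos hε₁0 hdtop
    obtain ⟨K, hK1, hK⟩ := hrefine ε'' hε''pos
    refine ⟨K, fun a ha b hb => ?_⟩
    have h1 : ν (R (a+1) - R ((a+1)*(b+1))) ≤ c * ε'' :=
      hK (a+1) (le_trans ha (Nat.le_succ a)) (b+1) (Nat.le_add_left 1 b)
    have h2 : ν (R (b+1) - R ((a+1)*(b+1))) ≤ c * ε'' := by
      have := hK (b+1) (le_trans hb (Nat.le_succ b)) (a+1) (Nat.le_add_left 1 a)
      rwa [Nat.mul_comm] at this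
    have hhalf : c * ε'' + c * ε'' ≤ ε₁ / 2 := by
      have e1 : c * ε'' + c * ε'' = 2 * c * ε'' := by ring
      rw [e1]
      have e2 : (2:ℝ≥0∞) * c * ε'' ≤ 2 * (c+1) * ε'' := by gcongr; exact le_self_add
      refine e2.trans ?_
      rw [hε''def, ← mul_div_assoc]
      rw [show (4:ℝ≥0∞)*(c+1) = (2*(c+1)) * 2 by ring]
      rw [ENNReal.mul_div_mul_left _ _
        (by simp) (ENNReal.mul_ne_top (by simp)
          (ENNReal.add_ne_top.mpr ⟨hcne, ENNReal.one_ne_top⟩))]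
    calc ν (R (a+1) - R (b+1))
        ≤ ν (R (a+1) - R ((a+1)*(b+1))) + ν (R ((a+1)*(b+1)) - R (b+1)) := hν.tri _ _ _
      _ ≤ c * ε'' + c * ε'' := add_le_add h1 (by rw [hν.sub_comm]; exact h2)
      _ ≤ ε₁ / 2 := hhalf
      _ < ε₁ := ENNReal.half_lt_self hε₁0 hε₁top
      _ ≤ ε := min_le_left _ _
  -- Step 5 : pass to the limit
  have hRfin : ∀ m : ℕ, ν (R (m+1)) ≠ ⊤ := fun m =>
    ((hstep1 (m+1) (Nat.le_add_left 1 m)).trans_lt ENNReal.ofReal_lt_top).ne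
  obtain ⟨x, hxfin, hxt⟩ := hcomp (fun m => R (m+1)) hRfin hcauchy
  have hxE : Tendsto (fun m => R (m+1)) atTop (nhds x) := by
    rw [tendsto_iff_norm_sub_tendsto_zero]
    have h1 : Tendsto (fun m => ((‖R (m+1) - x‖₊ : ℝ≥0∞))) atTop (nhds 0) :=
      tendsto_of_tendsto_of_tendsto_of_le_of_le tendsto_const_nhds hxt
        (fun _ => zero_le) (fun m => hamb _)
    have h2 := (ENNReal.tendsto_toReal (a := 0) (by simp)).comp h1
    exact Tendsto.congr (fun m => by simp [Function.comp_apply]) h2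
  have hxeq : x = ∫ s in u..v, h s := tendsto_nhds_unique hxE hstep2
  refine ENNReal.le_of_forall_pos_le_add fun ε hε _ => ?_
  have hev : ∀ᶠ m in atTop, ν (R (m+1) - x) < (ε:ℝ≥0∞) :=
    hxt (Iio_mem_nhds (by exact_mod_cast hε))
  obtain ⟨m, hm⟩ := hev.exists
  calc ν (∫ s in u..v, h s)
      ≤ ν ((∫ s in u..v, h s) - R (m+1)) + ν (R (m+1)) := hν.le_add _ _
    _ ≤ ε + ENNReal.ofReal (∫ s in u..v, φ s) := by
        refine add_le_add ?_ (hstep1 (m+1) (Nat.le_add_left 1 m))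
        rw [hν.sub_comm, ← hxeq]
        exact hm.le
    _ = ENNReal.ofReal (∫ s in u..v, φ s) + ε := add_comm _ _


theorem suc_sub {ν : E → ℝ≥0∞} (hν : IsENorm ν) {T : ℝ} {f g : ℝ → E}
    (hf : SUC ν T f) (hg : SUC ν T g) : SUC ν T (fun s => f s - g s) := by
  intro ε hε
  have hε2 : (0:ℝ≥0∞) < ε / 2 := ENNReal.half_pos hε.ne'
  obtain ⟨δ1, hδ1, h1⟩ := hf (ε/2) hε2
  obtain ⟨δ2, hδ2, h2⟩ := hg (ε/2) hε2
  refine ⟨min δ1 δ2, lt_min hδ1 hδ2, fun s hs t ht hst => ?_⟩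
  have e : (f s - g s) - (f t - g t) = (f s - f t) + -(g s - g t) := by abel
  calc ν ((f s - g s) - (f t - g t)) ≤ ν (f s - f t) + ν (-(g s - g t)) := by
        rw [e]; exact hν.add _ _
    _ = ν (f s - f t) + ν (g s - g t) := by rw [hν.neg]
    _ < ε / 2 + ε / 2 :=
        ENNReal.add_lt_add (h1 s hs t ht (hst.trans_le (min_le_left _ _)))
          (h2 s hs t ht (hst.trans_le (min_le_right _ _)))
    _ = ε := ENNReal.add_halves ε

theorem sfin_sub {ν : E → ℝ≥0∞} (hν : IsENorm ν) {T : ℝ} {f g : ℝ → E}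
    (hf : SFin ν T f) (hg : SFin ν T g) : SFin ν T (fun s => f s - g s) := by
  intro t ht
  have : ν (f t - g t) ≤ ν (f t) + ν (g t) := by
    calc ν (f t - g t) ≤ ν (f t) + ν (-(g t)) := by
          rw [sub_eq_add_neg]; exact hν.add _ _
      _ = ν (f t) + ν (g t) := by rw [hν.neg]
  exact (this.trans_lt (ENNReal.add_lt_top.mpr
    ⟨(hf t ht).lt_top, (hg t ht).lt_top⟩)).ne

section Context

variable {amin amax : ℝ} {N : ℝ → E → ℝ≥0∞} {q L : ℝ} {F : E → E} {T : ℝ}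

/-- composition with `F` : uniform continuity and finiteness one level up -/
theorem Fcomp
    (hadd : ∀ a : ℝ, amin ≤ a → a ≤ amax → ∀ x y : E, N a (x + y) ≤ N a x + N a y)
    (hzero : ∀ a : ℝ, amin ≤ a → a ≤ amax → N a 0 = 0)
    (hsmul : ∀ a : ℝ, amin ≤ a → a ≤ amax → ∀ (c : ℝ) (x : E),
      N a (c • x) = (‖c‖₊ : ℝ≥0∞) * N a x)
    (hFmap : ∀ a b : ℝ, amin ≤ a → a < b → b ≤ amax → ∀ x : E,
      N a x ≠ ⊤ → N b (F x) ≠ ⊤)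
    (hFlip : ∀ a b : ℝ, amin ≤ a → a < b → b ≤ amax → ∀ x y : E,
      N a x ≠ ⊤ → N a y ≠ ⊤ →
      N b (F x - F y) ≤ ENNReal.ofReal (L / (b - a) ^ q) * N a (x - y))
    {γ γ' : ℝ} (h1 : amin ≤ γ) (h2 : γ < γ') (h3 : γ' ≤ amax)
    {h : ℝ → E} (huc : SUC (N γ) T h) (hfin : SFin (N γ) T h) :
    SUC (N γ') T (fun s => F (h s)) ∧ SFin (N γ') T (fun s => F (h s)) := by
  constructor
  · intro ε hε
    set Cq := ENNReal.ofReal (L / (γ' - γ) ^ q) with hCq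
    have hCqne : Cq ≠ ⊤ := ENNReal.ofReal_ne_top
    set ε₁ := min ε 1 with hε₁def
    have hε₁pos : 0 < ε₁ := lt_min hε one_pos
    have hε₁top : ε₁ ≠ ⊤ := ((min_le_right _ _).trans_lt (by simp)).ne
    have hε₁0 : ε₁ ≠ 0 := hε₁pos.ne'
    set ε₂ := ε₁ / (2 * (Cq + 1)) with hε₂def
    have hε₂pos : 0 < ε₂ := ENNReal.div_pos hε₁0
      (ENNReal.mul_ne_top (by simp) (ENNReal.add_ne_top.mpr ⟨hCqne, ENNReal.one_ne_top⟩))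
    obtain ⟨δ, hδpos, hδ⟩ := huc ε₂ hε₂pos
    refine ⟨δ, hδpos, fun s hs t ht hst => ?_⟩
    have hb := hFlip γ γ' h1 h2 h3 (h s) (h t) (hfin s hs) (hfin t ht)
    calc N γ' (F (h s) - F (h t)) ≤ Cq * N γ (h s - h t) := hb
      _ ≤ Cq * ε₂ := by gcongr; exact (hδ s hs t ht hst).le
      _ ≤ (Cq + 1) * ε₂ := by gcongr; exact le_self_add
      _ = ε₁ / 2 := by
          rw [hε₂def, ← mul_div_assoc, show (2:ℝ≥0∞) * (Cq+1) = (Cq+1) * 2 by ring,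
            ENNReal.mul_div_mul_left _ _ (by simp)
              (ENNReal.add_ne_top.mpr ⟨hCqne, ENNReal.one_ne_top⟩)]
      _ < ε₁ := ENNReal.half_lt_self hε₁0 hε₁top
      _ ≤ ε := min_le_left _ _
  · exact fun t ht => hFmap γ γ' h1 h2 h3 _ (hfin t ht)

/-- `Imap` maps (uc+fin at level γ) to (uc+fin at level γ') -/
theorem imap_preserves
    (htop : ∀ x : E, N amax x = (‖x‖₊ : ℝ≥0∞))
    (hmono : ∀ a b : ℝ, amin ≤ a → a ≤ b → b ≤ amax → ∀ x : E, N b x ≤ N a x)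
    (hzero : ∀ a : ℝ, amin ≤ a → a ≤ amax → N a 0 = 0)
    (hadd : ∀ a : ℝ, amin ≤ a → a ≤ amax → ∀ x y : E, N a (x + y) ≤ N a x + N a y)
    (hsmul : ∀ a : ℝ, amin ≤ a → a ≤ amax → ∀ (c : ℝ) (x : E),
      N a (c • x) = (‖c‖₊ : ℝ≥0∞) * N a x)
    (hcomplete : ∀ a : ℝ, amin ≤ a → a ≤ amax → ∀ u : ℕ → E,
      (∀ n, N a (u n) ≠ ⊤) →
      (∀ ε : ℝ≥0∞, 0 < ε → ∃ K : ℕ, ∀ m ≥ K, ∀ n ≥ K, N a (u m - u n) < ε) →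
      ∃ x : E, N a x ≠ ⊤ ∧ Tendsto (fun n => N a (u n - x)) atTop (nhds 0))
    (hFmap : ∀ a b : ℝ, amin ≤ a → a < b → b ≤ amax → ∀ x : E,
      N a x ≠ ⊤ → N b (F x) ≠ ⊤)
    (hFlip : ∀ a b : ℝ, amin ≤ a → a < b → b ≤ amax → ∀ x y : E,
      N a x ≠ ⊤ → N a y ≠ ⊤ →
      N b (F x - F y) ≤ ENNReal.ofReal (L / (b - a) ^ q) * N a (x - y))
    (hT : 0 < T) {x₀ : E} (hx₀ : N amin x₀ ≠ ⊤)
    {γ γ' : ℝ} (h1 : amin ≤ γ) (h2 : γ < γ') (h3 : γ' ≤ amax)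
    {h : ℝ → E} (huc : SUC (N γ) T h) (hfin : SFin (N γ) T h) :
    SUC (N γ') T (Imap F x₀ h) ∧ SFin (N γ') T (Imap F x₀ h) := by
  have hγ'min : amin ≤ γ' := h1.trans h2.le
  have hν' : IsENorm (N γ') := ⟨hzero γ' hγ'min h3, hadd γ' hγ'min h3, hsmul γ' hγ'min h3⟩
  have hamb' : ∀ y : E, (‖y‖₊ : ℝ≥0∞) ≤ N γ' y := fun y =>
    (htop y) ▸ hmono γ' amax hγ'min h3 le_rfl y
  obtain ⟨hFuc, hFfin⟩ := Fcomp hadd hzero hsmul hFmap hFlip h1 h2 h3 huc hfin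
  obtain ⟨C, hC0, hCb⟩ := bounded hν' hT.le hFuc hFfin
  have hx₀' : N γ' x₀ ≠ ⊤ :=
    ((hmono amin γ' le_rfl hγ'min h3 x₀).trans_lt hx₀.lt_top).ne
  have hintb : ∀ u v : ℝ, 0 ≤ u → u ≤ v → v ≤ T →
      N γ' (∫ s in u..v, F (h s)) ≤ ENNReal.ofReal (C * (v - u)) := by
    intro u v h0u huv hvT
    have := integral_bound hν' hamb' (hcomplete γ' hγ'min h3) hFuc hFfin h0u huv hvT
      (φ := fun _ => C) (monotoneOn_const) (fun s _ => hC0)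
      (fun s hs => hCb s (Icc_subset_Icc h0u hvT hs))
    simpa [intervalIntegral.integral_const, smul_eq_mul, mul_comm] using this
  constructor
  · -- uniform continuity
    intro ε hε
    set ε₁ := min ε 1 with hε₁def
    have hε₁pos : 0 < ε₁ := lt_min hε one_pos
    have hε₁top : ε₁ ≠ ⊤ := ((min_le_right _ _).trans_lt (by simp)).ne
    have hε₁0 : ε₁ ≠ 0 := hε₁pos.ne'
    have hε₁r : 0 < ε₁.toReal := ENNReal.toReal_pos hε₁0 hε₁top
    set δ := ε₁.toReal / (C + 1) with hδdef
    have hδpos : 0 < δ := div_pos hε₁r (by linarith)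
    have main : ∀ s t : ℝ, s ∈ Icc (0:ℝ) T → t ∈ Icc (0:ℝ) T → t ≤ s → s - t < δ →
        N γ' (Imap F x₀ h s - Imap F x₀ h t) < ε := by
      intro s t hs ht hts hst
      have hcF : ContinuousOn (fun s => F (h s)) (Icc (0:ℝ) T) := contOn hamb' hFuc
      have hint1 : IntervalIntegrable (fun s => F (h s)) volume 0 s :=
        (hcF.mono (by rw [uIcc_of_le hs.1]; exact Icc_subset_Icc le_rfl hs.2)).intervalIntegrable
      have hint2 : IntervalIntegrable (fun s => F (h s)) volume 0 t :=
        (hcF.mono (by rw [uIcc_of_le ht.1]; exact Icc_subset_Icc le_rfl ht.2)).intervalIntegrable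
      have hdiff : Imap F x₀ h s - Imap F x₀ h t = ∫ r in t..s, F (h r) := by
        simp only [Imap]
        rw [add_sub_add_left_eq_sub, intervalIntegral.integral_interval_sub_left hint1 hint2]
      rw [hdiff]
      calc N γ' (∫ r in t..s, F (h r)) ≤ ENNReal.ofReal (C * (s - t)) :=
            hintb t s ht.1 hts hs.2
        _ < ε₁ := by
            rw [← ENNReal.ofReal_toReal hε₁top]
            apply ENNReal.ofReal_lt_ofReal_iff_of_nonneg (by nlinarith [hs.1, ht.1, hts]) |>.mpr
            have hClt : C * (s - t) ≤ C * δ := by nlinarith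
            have hy : ε₁.toReal / (C+1) * (C+1) = ε₁.toReal :=
              div_mul_cancel₀ _ (by linarith : (C:ℝ)+1 ≠ 0)
            have hypos : 0 < ε₁.toReal / (C+1) := div_pos hε₁r (by linarith)
            have : C * δ < ε₁.toReal := by
              rw [hδdef]
              nlinarith
            linarith
        _ ≤ ε := min_le_left _ _
    refine ⟨δ, hδpos, fun s hs t ht hst => ?_⟩
    rcases le_total t s with hts | hts
    · exact main s t hs ht hts (by rw [abs_of_nonneg (by linarith)] at hst; linarith)
    · rw [hν'.sub_comm]
      exact main t s ht hs hts (by rw [abs_of_nonpos (by linarith)] at hst; linarith)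
  · -- finiteness
    intro t ht
    have : N γ' (Imap F x₀ h t) ≤ N γ' x₀ + N γ' (∫ s in (0:ℝ)..t, F (h s)) :=
      hν'.add _ _
    refine (this.trans_lt (ENNReal.add_lt_top.mpr ⟨hx₀'.lt_top, ?_⟩)).ne
    exact ((hintb 0 t le_rfl ht.1 ht.2).trans_lt ENNReal.ofReal_lt_top)

end Context

end Stmt12

set_option maxHeartbeats 1000000 in
open Stmt12 in
theorem statement12
    -- the scale of Banach spaces, realised inside the ambient space `E = X_{amax}`
    (E : Type*) [NormedAddCommGroup E] [NormedSpace ℝ E] [CompleteSpace E]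
    (amin amax : ℝ) (hamin : 0 < amin) (hminmax : amin < amax)
    (N : ℝ → E → ℝ≥0∞)
    (htop : ∀ x : E, N amax x = (‖x‖₊ : ℝ≥0∞))
    (hmono : ∀ a b : ℝ, amin ≤ a → a ≤ b → b ≤ amax → ∀ x : E, N b x ≤ N a x)
    (hzero : ∀ a : ℝ, amin ≤ a → a ≤ amax → N a 0 = 0)
    (hadd : ∀ a : ℝ, amin ≤ a → a ≤ amax → ∀ x y : E, N a (x + y) ≤ N a x + N a y)
    (hsmul : ∀ a : ℝ, amin ≤ a → a ≤ amax → ∀ (c : ℝ) (x : E),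
      N a (c • x) = (‖c‖₊ : ℝ≥0∞) * N a x)
    (hcomplete : ∀ a : ℝ, amin ≤ a → a ≤ amax → ∀ u : ℕ → E,
      (∀ n, N a (u n) ≠ ⊤) →
      (∀ ε : ℝ≥0∞, 0 < ε → ∃ K : ℕ, ∀ m ≥ K, ∀ n ≥ K, N a (u m - u n) < ε) →
      ∃ x : E, N a x ≠ ⊤ ∧ Tendsto (fun n => N a (u n - x)) atTop (nhds 0))
    -- the Ovsjannikov map `F` of order `q` and constant `L`
    (q L : ℝ) (hq : 0 ≤ q) (hL : 0 < L) (F : E → E)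
    (hFmap : ∀ a b : ℝ, amin ≤ a → a < b → b ≤ amax → ∀ x : E,
      N a x ≠ ⊤ → N b (F x) ≠ ⊤)
    (hFlip : ∀ a b : ℝ, amin ≤ a → a < b → b ≤ amax → ∀ x y : E,
      N a x ≠ ⊤ → N a y ≠ ⊤ →
      N b (F x - F y) ≤ ENNReal.ofReal (L / (b - a) ^ q) * N a (x - y))
    (T : ℝ) (hT : 0 < T) (x₀ : E) (hx₀ : N amin x₀ ≠ ⊤)
    :
    ∀ α β : ℝ, amin < α → α < β → β < amax →
      ∀ f g : ℝ → E, ScaleContOn N amin T f → ScaleContOn N amin T g →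
        ∀ n : ℕ,
          (⨆ t ∈ Icc (0 : ℝ) T,
              N β ((Imap F x₀)^[n] f t - (Imap F x₀)^[n + 1] g t)) ≤
            ENNReal.ofReal
                (L ^ n * T ^ n * (n : ℝ) ^ (q * n) /
                  ((β - α) ^ (q * n) * (n.factorial : ℝ))) *
              ⨆ t ∈ Icc (0 : ℝ) T, N α (f t - Imap F x₀ g t) := by
  intro α β hα hαβ hβ f g hf hg n
  have hβα : (0:ℝ) < β - α := by linarith
  have hEN : ∀ a : ℝ, amin ≤ a → a ≤ amax → IsENorm (N a) := fun a ha1 ha2 =>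
    ⟨hzero a ha1 ha2, hadd a ha1 ha2, hsmul a ha1 ha2⟩
  have hamb : ∀ a : ℝ, amin ≤ a → a ≤ amax → ∀ y : E, (‖y‖₊ : ℝ≥0∞) ≤ N a y :=
    fun a ha1 ha2 y => (htop y) ▸ hmono a amax ha1 ha2 le_rfl y
  have hUCF : ∀ (h : ℝ → E), ScaleContOn N amin T h → ∀ k : ℕ, ∀ γ : ℝ,
      amin < γ → γ ≤ amax →
      SUC (N γ) T ((Imap F x₀)^[k] h) ∧ SFin (N γ) T ((Imap F x₀)^[k] h) := by
    intro h hsc k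
    induction k with
    | zero =>
      intro γ hγ1 hγ2
      have huc0 : SUC (N amin) T h :=
        suc_of_pointwise (hEN amin le_rfl hminmax.le) hsc.2
      simp only [Function.iterate_zero, id_eq]
      constructor
      · intro ε hε
        obtain ⟨δ, hδpos, hδ⟩ := huc0 ε hε
        exact ⟨δ, hδpos, fun s hs t ht hst =>
          (hmono amin γ le_rfl hγ1.le hγ2 _).trans_lt (hδ s hs t ht hst)⟩
      · exact fun t ht =>
          ((hmono amin γ le_rfl hγ1.le hγ2 _).trans_lt (hsc.1 t ht).lt_top).ne
    | succ k ih =>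
      intro γ hγ1 hγ2
      have hγ'1 : amin < (amin + γ)/2 := by linarith
      have hγ'2 : (amin + γ)/2 < γ := by linarith
      obtain ⟨huck, hfink⟩ := ih ((amin + γ)/2) hγ'1 (by linarith)
      rw [Function.iterate_succ_apply']
      exact imap_preserves htop hmono hzero hadd hsmul hcomplete hFmap hFlip hT hx₀
        hγ'1.le hγ'2 hγ2 huck hfink
  set M := ⨆ t ∈ Icc (0:ℝ) T, N α (f t - Imap F x₀ g t) with hMdef
  set Cn := L ^ n * T ^ n * (n : ℝ) ^ (q * n) / ((β - α) ^ (q * n) * (n.factorial : ℝ))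
    with hCndef
  have hnqpos : (0:ℝ) < (n:ℝ) ^ (q * (n:ℝ)) := by
    rcases Nat.eq_zero_or_pos n with rfl | hn
    · norm_num
    · exact Real.rpow_pos_of_pos (by exact_mod_cast hn) _
  have hCnpos : 0 < Cn := by
    apply div_pos
    · exact mul_pos (mul_pos (pow_pos hL n) (pow_pos hT n)) hnqpos
    · exact mul_pos (Real.rpow_pos_of_pos hβα _) (by exact_mod_cast n.factorial_pos)
  rcases eq_or_ne M ⊤ with hM | hM
  · rw [hM, ENNReal.mul_top (ENNReal.ofReal_pos.mpr hCnpos).ne']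
    exact le_top
  set Mr := M.toReal with hMrdef
  have hMr : M = ENNReal.ofReal Mr := (ENNReal.ofReal_toReal hM).symm
  have hMr0 : 0 ≤ Mr := ENNReal.toReal_nonneg
  rcases Nat.eq_zero_or_pos n with rfl | hn
  · -- case n = 0
    have hCn1 : Cn = 1 := by
      rw [hCndef]
      norm_num
    rw [hCn1]
    simp only [ENNReal.ofReal_one, one_mul, Function.iterate_zero, id_eq, zero_add,
      Function.iterate_one]
    exact iSup₂_le fun t ht => (hmono α β hα.le hαβ.le hβ.le _).trans
      (le_iSup₂ (f := fun t (_ : t ∈ Icc (0:ℝ) T) => N α (f t - Imap F x₀ g t)) t ht)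
  -- case 1 ≤ n
  set ε₀ := (β - α) / n with hε₀def
  have hnR : (0:ℝ) < n := by exact_mod_cast hn
  have hε₀pos : 0 < ε₀ := div_pos hβα hnR
  set c := L / ε₀ ^ q with hcdef
  have hcpos : 0 < c := div_pos hL (Real.rpow_pos_of_pos hε₀pos q)
  have key : ∀ k : ℕ, k ≤ n → ∀ t ∈ Icc (0:ℝ) T,
      N (α + (k:ℝ) * ε₀) ((Imap F x₀)^[k] f t - (Imap F x₀)^[k+1] g t)
        ≤ ENNReal.ofReal (c ^ k * t ^ k / (k.factorial : ℝ)) * M := by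
    intro k
    induction k with
    | zero =>
      intro _ t ht
      simp only [Nat.cast_zero, zero_mul, add_zero, pow_zero, one_mul, Nat.factorial_zero,
        Nat.cast_one, div_one, ENNReal.ofReal_one, Function.iterate_zero, id_eq, zero_add,
        Function.iterate_one]
      exact le_iSup₂ (f := fun t (_ : t ∈ Icc (0:ℝ) T) => N α (f t - Imap F x₀ g t)) t ht
    | succ k ih =>
      intro hk1 t ht
      have hkn : k ≤ n := (Nat.le_succ k).trans hk1
      have ht0 : (0:ℝ) ≤ t := ht.1
      set a0 := α + (k:ℝ) * ε₀ with ha0def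
      set a1 := α + ((k+1:ℕ):ℝ) * ε₀ with ha1def
      have hnε₀ : (n:ℝ) * ε₀ = β - α := by
        rw [hε₀def]; field_simp
      have hk0 : (0:ℝ) ≤ (k:ℝ) * ε₀ := mul_nonneg (Nat.cast_nonneg k) hε₀pos.le
      have ha0min : amin < a0 := by rw [ha0def]; linarith
      have ha0β : a0 ≤ β := by
        rw [ha0def]
        have : (k:ℝ) * ε₀ ≤ (n:ℝ) * ε₀ :=
          mul_le_mul_of_nonneg_right (by exact_mod_cast hkn) hε₀pos.le
        linarith
      have ha0max : a0 ≤ amax := ha0β.trans hβ.le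
      have ha1β : a1 ≤ β := by
        rw [ha1def]
        have : ((k+1:ℕ):ℝ) * ε₀ ≤ (n:ℝ) * ε₀ :=
          mul_le_mul_of_nonneg_right (by exact_mod_cast hk1) hε₀pos.le
        linarith
      have ha1max : a1 ≤ amax := ha1β.trans hβ.le
      have ha01 : a0 < a1 := by
        rw [ha0def, ha1def]
        push_cast
        nlinarith
      have ha1_a0 : a1 - a0 = ε₀ := by
        rw [ha0def, ha1def]; push_cast; ring
      have ha1min : amin ≤ a1 := ha0min.le.trans ha01.le
      obtain ⟨huc1, hfin1⟩ := hUCF f hf k a0 ha0min ha0max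
      obtain ⟨huc2, hfin2⟩ := hUCF g hg (k+1) a0 ha0min ha0max
      obtain ⟨hFuc1, hFfin1⟩ := Fcomp hadd hzero hsmul hFmap hFlip
        ha0min.le ha01 ha1max huc1 hfin1
      obtain ⟨hFuc2, hFfin2⟩ := Fcomp hadd hzero hsmul hFmap hFlip
        ha0min.le ha01 ha1max huc2 hfin2
      have hν1 : IsENorm (N a1) := hEN a1 ha1min ha1max
      have hamb1 : ∀ y : E, (‖y‖₊:ℝ≥0∞) ≤ N a1 y := hamb a1 ha1min ha1max
      have hHuc : SUC (N a1) T
          (fun s => F ((Imap F x₀)^[k] f s) - F ((Imap F x₀)^[k+1] g s)) :=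
        suc_sub hν1 hFuc1 hFuc2
      have hHfin : SFin (N a1) T
          (fun s => F ((Imap F x₀)^[k] f s) - F ((Imap F x₀)^[k+1] g s)) :=
        sfin_sub hν1 hFfin1 hFfin2
      have hcF1 : ContinuousOn (fun s => F ((Imap F x₀)^[k] f s)) (Icc (0:ℝ) T) :=
        contOn hamb1 hFuc1
      have hcF2 : ContinuousOn (fun s => F ((Imap F x₀)^[k+1] g s)) (Icc (0:ℝ) T) :=
        contOn hamb1 hFuc2
      have hsubt : uIcc (0:ℝ) t ⊆ Icc (0:ℝ) T := by
        rw [uIcc_of_le ht0]; exact Icc_subset_Icc le_rfl ht.2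
      have hint1 : IntervalIntegrable (fun s => F ((Imap F x₀)^[k] f s)) volume 0 t :=
        (hcF1.mono hsubt).intervalIntegrable
      have hint2 : IntervalIntegrable (fun s => F ((Imap F x₀)^[k+1] g s)) volume 0 t :=
        (hcF2.mono hsubt).intervalIntegrable
      rw [Function.iterate_succ_apply', Function.iterate_succ_apply']
      have heq : Imap F x₀ ((Imap F x₀)^[k] f) t - Imap F x₀ ((Imap F x₀)^[k+1] g) t
          = ∫ s in (0:ℝ)..t, (F ((Imap F x₀)^[k] f s) - F ((Imap F x₀)^[k+1] g s)) := by
        simp only [Imap]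
        rw [add_sub_add_left_eq_sub, ← intervalIntegral.integral_sub hint1 hint2]
      rw [heq]
      have hφb : ∀ s ∈ Icc (0:ℝ) t,
          N a1 (F ((Imap F x₀)^[k] f s) - F ((Imap F x₀)^[k+1] g s))
            ≤ ENNReal.ofReal (c^(k+1) * s^k / (k.factorial:ℝ) * Mr) := by
        intro s hs
        have hsT : s ∈ Icc (0:ℝ) T := ⟨hs.1, hs.2.trans ht.2⟩
        have hb := hFlip a0 a1 ha0min.le ha01 ha1max _ _ (hfin1 s hsT) (hfin2 s hsT)
        rw [ha1_a0] at hb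
        calc N a1 (F ((Imap F x₀)^[k] f s) - F ((Imap F x₀)^[k+1] g s))
            ≤ ENNReal.ofReal c * N a0 ((Imap F x₀)^[k] f s - (Imap F x₀)^[k+1] g s) := by
              rw [hcdef]; exact hb
          _ ≤ ENNReal.ofReal c * (ENNReal.ofReal (c^k * s^k / (k.factorial:ℝ)) * M) := by
              gcongr
              exact ih hkn s hsT
          _ = ENNReal.ofReal (c^(k+1) * s^k / (k.factorial:ℝ) * Mr) := by
              have hA : 0 ≤ c^k * s^k / (k.factorial:ℝ) :=
                div_nonneg (mul_nonneg (pow_nonneg hcpos.le _) (pow_nonneg hs.1 _))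
                  (Nat.cast_nonneg _)
              rw [hMr, ← ENNReal.ofReal_mul hA, ← ENNReal.ofReal_mul hcpos.le]
              congr 1
              ring
      have hmonφ : MonotoneOn (fun s => c^(k+1) * s^k / (k.factorial:ℝ) * Mr)
          (Icc (0:ℝ) t) := by
        intro x hx y hy hxy
        have hxk : x^k ≤ y^k := pow_le_pow_left₀ hx.1 hxy k
        have h1 : (0:ℝ) < (k.factorial:ℝ) := by exact_mod_cast k.factorial_pos
        have h2 : c^(k+1) * x^k ≤ c^(k+1) * y^k :=
          mul_le_mul_of_nonneg_left hxk (pow_nonneg hcpos.le _)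
        exact mul_le_mul_of_nonneg_right (by
          rw [div_eq_mul_inv, div_eq_mul_inv]
          exact mul_le_mul_of_nonneg_right h2 (inv_nonneg.mpr h1.le)) hMr0
      have hφ0 : ∀ s ∈ Icc (0:ℝ) t, 0 ≤ c^(k+1) * s^k / (k.factorial:ℝ) * Mr := by
        intro s hs
        exact mul_nonneg (div_nonneg (mul_nonneg (pow_nonneg hcpos.le _)
          (pow_nonneg hs.1 _)) (Nat.cast_nonneg _)) hMr0
      have hbig := integral_bound hν1 hamb1 (hcomplete a1 ha1min ha1max)
        hHuc hHfin (le_refl (0:ℝ)) ht0 ht.2 hmonφ hφ0 hφb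
      refine hbig.trans ?_
      have hcalc : (∫ s in (0:ℝ)..t, (c^(k+1) * s^k / (k.factorial:ℝ) * Mr))
          = c^(k+1) * t^(k+1) / (((k+1).factorial:ℝ)) * Mr := by
        have hfe : (fun s => c^(k+1) * s^k / (k.factorial:ℝ) * Mr)
            = fun s => (c^(k+1) / (k.factorial:ℝ) * Mr) * s^k := by
          funext s; ring
        rw [hfe, intervalIntegral.integral_const_mul, integral_pow]
        rw [Nat.factorial_succ]
        have hkf : ((k.factorial:ℝ)) ≠ 0 := by exact_mod_cast k.factorial_pos.ne'
        have hk1' : ((k:ℝ)+1) ≠ 0 := by positivity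
        push_cast
        field_simp
        ring
      rw [hcalc, hMr]
      rw [ENNReal.ofReal_mul (div_nonneg (mul_nonneg (pow_nonneg hcpos.le _)
        (pow_nonneg ht0 _)) (Nat.cast_nonneg _))]
  -- conclusion
  have hαn : α + (n:ℝ) * ε₀ = β := by
    rw [hε₀def]; field_simp; ring
  refine iSup₂_le fun t ht => ?_
  have h1 := key n le_rfl t ht
  rw [hαn] at h1
  refine h1.trans ?_
  refine mul_le_mul_left (ENNReal.ofReal_le_ofReal ?_) M
  have hcn : c ^ n = L^n * (n:ℝ)^(q*(n:ℝ)) / (β-α)^(q*(n:ℝ)) := by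
    rw [hcdef, div_pow]
    have h2 : (ε₀ ^ q) ^ n = ε₀ ^ (q * (n:ℝ)) := by
      rw [← Real.rpow_natCast (ε₀ ^ q) n, ← Real.rpow_mul hε₀pos.le]
    have h3 : ε₀ ^ (q*(n:ℝ)) = (β-α)^(q*(n:ℝ)) / (n:ℝ)^(q*(n:ℝ)) := by
      rw [hε₀def, Real.div_rpow hβα.le (Nat.cast_nonneg n)]
    rw [h2, h3]
    rw [div_div_eq_mul_div]
  have hCnc : Cn = c^n * T^n / (n.factorial:ℝ) := by
    rw [hCndef, hcn]
    have hb1 : (0:ℝ) < (β-α)^(q*(n:ℝ)) := Real.rpow_pos_of_pos hβα _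
    have hf1 : (0:ℝ) < (n.factorial:ℝ) := by exact_mod_cast n.factorial_pos
    field_simp
  rw [hCnc]
  have htn : t^n ≤ T^n := pow_le_pow_left₀ ht.1 ht.2 n
  have h2 : c^n * t^n ≤ c^n * T^n :=
    mul_le_mul_of_nonneg_left htn (pow_nonneg hcpos.le _)
  have hf1 : (0:ℝ) < (n.factorial:ℝ) := by exact_mod_cast n.factorial_pos
  rw [div_eq_mul_inv, div_eq_mul_inv]
  exact mul_le_mul_of_nonneg_right h2 (inv_nonneg.mpr hf1.le)
end
end
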